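/- arXiv:1303.0262 — 6 statements merged into one kernel-verified Lean document; each statement's English description precedes it below -/
import Mathlib

section
/- There exists a constant C > 0 such that for every integer n ≥ 2 and every set S of n points in ℝ², S admits a covering path with m segments satisfying m ≤ n/2 + C·n/log n. -/
noncomputable section

open scoped RealInnerProductSpace

/-- Points of the Euclidean plane. -/
abbrev Pt : Type := EuclideanSpace ℝ (Fin 2)

/-- The `i`-th closed segment of a polygonal path with vertices `v 0, …, v m`. -/
def pathSeg {m : ℕ} (v : Fin (m + 1) → Pt) (i : Fin m) : Set Pt :=
  segment ℝ (v i.castSucc) (v i.succ)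

/-- `v 0, …, v m` is a covering path with `m` segments for `S`:
every point of `S` lies on some segment of the path. -/
def IsCoveringPath (S : Set Pt) (m : ℕ) (v : Fin (m + 1) → Pt) : Prop :=
  ∀ p ∈ S, ∃ i : Fin m, p ∈ pathSeg v i

/-- The polygonal path with vertices `v 0, …, v m` is noncrossing (a simple arc):
consecutive segments meet exactly in their common vertex, and
non-consecutive segments are disjoint. -/
def IsNoncrossing (m : ℕ) (v : Fin (m + 1) → Pt) : Prop :=
  ∀ i j : Fin m, i < j →
    (((j : ℕ) = (i : ℕ) + 1) → pathSeg v i ∩ pathSeg v j = {v i.succ}) ∧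
    (((i : ℕ) + 1 < (j : ℕ)) → pathSeg v i ∩ pathSeg v j = ∅)


namespace CP


def mkPt (x y : ℝ) : Pt := WithLp.toLp 2 ![x, y]

@[simp] lemma mkPt_zero (x y : ℝ) : mkPt x y 0 = x := rfl
@[simp] lemma mkPt_one (x y : ℝ) : mkPt x y 1 = y := rfl

lemma Pt.ext {p q : Pt} (h0 : p 0 = q 0) (h1 : p 1 = q 1) : p = q := by
  refine PiLp.ext fun i => ?_
  fin_cases i <;> assumption

/-- slope of line through p q -/
def slope (p q : Pt) : ℝ := (q 1 - p 1) / (q 0 - p 0)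

/-- z lies on the (non-vertical) line through a b -/
def onLine (a b z : Pt) : Prop := z 1 = a 1 + slope a b * (z 0 - a 0)

lemma onLine_self_left (a b : Pt) : onLine a b a := by simp [onLine]

lemma onLine_self_right (a b : Pt) (h : a 0 ≠ b 0) : onLine a b b := by
  unfold onLine slope
  rw [div_mul_cancel₀]
  · ring
  · exact sub_ne_zero.mpr (Ne.symm h)

/-- a point on a nonvertical line with x-coordinate between two other points of the
line lies on the segment between them. -/
lemma segContain {a b z p w : Pt} (hab : a 0 ≠ b 0)
    (hz : onLine a b z) (hp : onLine a b p) (hw : onLine a b w)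
    (h1 : z 0 ≤ p 0) (h2 : p 0 ≤ w 0) : p ∈ segment ℝ z w := by
  rcases eq_or_lt_of_le (h1.trans h2) with heq | hlt
  · -- z 0 = w 0, hence all equal
    have hzp : z 0 = p 0 := le_antisymm h1 (heq ▸ h2)
    have hzw : z 0 = w 0 := heq
    have : p = z := Pt.ext hzp.symm (by rw [hp, hz, hzp])
    rw [this]; exact left_mem_segment _ _ _
  · set t : ℝ := (p 0 - z 0) / (w 0 - z 0) with ht
    have hwz : w 0 - z 0 > 0 := by linarith
    have ht0 : 0 ≤ t := div_nonneg (by linarith) (le_of_lt hwz)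
    have ht1 : t ≤ 1 := by rw [ht, div_le_one hwz]; linarith
    refine ⟨1 - t, t, by linarith, ht0, by ring, ?_⟩
    apply Pt.ext
    · show (1 - t) * z 0 + t * w 0 = p 0
      rw [ht]; field_simp; ring
    · show (1 - t) * z 1 + t * w 1 = p 1
      rw [hz, hp, hw, ht]
      field_simp; ring
def covL (S : Set Pt) (l : List Pt) : Prop :=
  ∀ p ∈ S, ∃ i : ℕ, ∃ h : i + 1 < l.length,
    p ∈ segment ℝ (l[i]'(by omega)) (l[i+1]'h)

lemma covL_mono {S T : Set Pt} {l : List Pt} (h : covL S l) (hsub : T ⊆ S) :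
    covL T l := fun p hp => h p (hsub hp)

lemma covL_append {S T : Set Pt} {l r : List Pt} (hl : covL S l) (hr : covL T r) :
    covL (S ∪ T) (l ++ r) := by
  intro p hp
  rcases hp with hp | hp
  · obtain ⟨i, h, hseg⟩ := hl p hp
    refine ⟨i, by simp; omega, ?_⟩
    rw [List.getElem_append_left (by omega), List.getElem_append_left (by omega)]
    exact hseg
  · obtain ⟨i, h, hseg⟩ := hr p hp
    refine ⟨l.length + i, by simp; omega, ?_⟩
    have e1 : (l ++ r)[l.length + i]'(by simp; omega) = r[i]'(by omega) := by
      rw [List.getElem_append_right (by omega)]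
      congr 1; omega
    have e2 : (l ++ r)[l.length + i + 1]'(by simp; omega) = r[i+1]'(by omega) := by
      rw [List.getElem_append_right (by omega)]
      congr 1; omega
    rw [e1, e2]
    exact hseg

lemma covL_cons {T : Set Pt} {r : List Pt} (hr : covL T r) (z : Pt) :
    covL T (z :: r) := by
  have := covL_append (S := ∅) (l := [z]) (by intro p hp; simp at hp) hr
  simpa using this

/-- transfer along a linear equivalence -/
lemma covL_map {S : Set Pt} {l : List Pt} (e : Pt ≃ₗ[ℝ] Pt)
    (h : covL (e '' S) l) : covL S (l.map e.symm) := by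
  intro p hp
  obtain ⟨i, hi, hseg⟩ := h (e p) ⟨p, hp, rfl⟩
  refine ⟨i, by simpa using hi, ?_⟩
  rw [List.getElem_map, List.getElem_map]
  have him := image_segment ℝ (e.symm.toLinearMap.toAffineMap) (l[i]'(by omega)) (l[i+1]'(by simpa using hi))
  simp only [LinearMap.coe_toAffineMap, LinearEquiv.coe_coe] at him
  rw [← him]
  exact ⟨e p, hseg, by simp⟩

/-- trivial path through a list of points: every listed point is covered,
 provided length ≥ 2 -/
lemma covL_trivial (l : List Pt) (h2 : 2 ≤ l.length) :
    covL {p | p ∈ l} l := by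
  intro p hp
  simp only [Set.mem_setOf_eq] at hp
  obtain ⟨j, hj, rfl⟩ := List.getElem_of_mem hp
  rcases Nat.eq_zero_or_pos j with rfl | hj0
  · exact ⟨0, by omega, left_mem_segment _ _ _⟩
  · refine ⟨j - 1, by omega, ?_⟩
    have : j - 1 + 1 = j := by omega
    simp_rw [this]
    exact right_mem_segment _ _ _

def IsCup : List Pt → Prop
  | a :: b :: c :: t => a 0 < b 0 ∧ slope a b ≤ slope b c ∧ IsCup (b :: c :: t)
  | [a, b] => a 0 < b 0
  | _ => True

def IsCapD : List Pt → Prop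
  | a :: b :: c :: t => b 0 < a 0 ∧ slope b a ≤ slope c b ∧ IsCapD (b :: c :: t)
  | [a, b] => b 0 < a 0
  | _ => True

@[simp] lemma neg_apply (p : Pt) (i : Fin 2) : (-p) i = -(p i) := rfl

lemma slope_neg (a b : Pt) : slope (-a) (-b) = slope b a := by
  unfold slope
  have e1 : (-b) 1 - (-a) 1 = a 1 - b 1 := by simp; ring
  have e2 : (-b) 0 - (-a) 0 = a 0 - b 0 := by simp; ring
  rw [e1, e2]

theorem isCup_neg : ∀ l : List Pt, IsCapD l → IsCup (l.map (fun p => -p))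
  | [] => fun _ => trivial
  | [a] => fun _ => trivial
  | [a, b] => fun h => by
      simp only [List.map] at *
      show (-a) 0 < (-b) 0
      have : b 0 < a 0 := h
      simpa using this
  | a :: b :: c :: t => fun h => by
      obtain ⟨h1, h2, h3⟩ := h
      have ih := isCup_neg (b :: c :: t) h3
      refine ⟨by simpa using h1, ?_, ih⟩
      rw [slope_neg, slope_neg]; exact h2

lemma slope_eq {p q : Pt} (h : p 0 < q 0) : q 1 - p 1 = slope p q * (q 0 - p 0) := by
  unfold slope
  rw [div_mul_cancel₀ _ (by linarith : q 0 - p 0 ≠ 0)]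

/-- intersection vertex between line(a,b) and line(c,d) for a convex 4-chain -/
lemma inter {a b c d : Pt} (hab : a 0 < b 0) (hbc : b 0 < c 0) (hcd : c 0 < d 0)
    (h1 : slope a b ≤ slope b c) (h2 : slope b c ≤ slope c d) :
    ∃ w : Pt, onLine a b w ∧ onLine c d w ∧ b 0 ≤ w 0 ∧ w 0 ≤ c 0 := by
  set s1 := slope a b with hs1
  set s2 := slope b c with hs2
  set s3 := slope c d with hs3
  have e1 : b 1 - a 1 = s1 * (b 0 - a 0) := slope_eq hab
  have e2 : c 1 - b 1 = s2 * (c 0 - b 0) := slope_eq hbc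
  rcases eq_or_lt_of_le (h1.trans h2) with heq | hlt
  · -- s1 = s3, hence s1 = s2 = s3 and b is on line(c,d)
    have hs12 : s1 = s2 := le_antisymm h1 (heq ▸ h2)
    have hs23 : s2 = s3 := le_antisymm h2 (heq ▸ h1)
    refine ⟨b, ?_, ?_, le_refl _, le_of_lt hbc⟩
    · show b 1 = a 1 + s1 * (b 0 - a 0); linarith
    · show b 1 = c 1 + s3 * (b 0 - c 0)
      rw [← hs23]; nlinarith [e2]
  · -- s1 < s3
    have hne : s1 - s3 ≠ 0 := by linarith
    set ξ : ℝ := (c 1 - s3 * c 0 - a 1 + s1 * a 0) / (s1 - s3) with hξ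
    refine ⟨mkPt ξ (a 1 + s1 * (ξ - a 0)), ?_, ?_, ?_, ?_⟩
    · show a 1 + s1 * (ξ - a 0) = a 1 + s1 * (ξ - a 0); rfl
    · show a 1 + s1 * (ξ - a 0) = c 1 + s3 * (ξ - c 0)
      rw [hξ]; field_simp; ring
    · show b 0 ≤ ξ
      rw [hξ, le_div_iff_of_neg (by linarith)]
      nlinarith [e1, e2]
    · show ξ ≤ c 0
      rw [hξ, div_le_iff_of_neg (by linarith)]
      nlinarith [e1, e2]


/-- covering a cup with ~half as many segments as points:
there is a vertex list `ws` such that for any starting vertex `z` on the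
line through the first two points and left of them, `z :: ws` covers the cup. -/
lemma isCup_x_lt : ∀ (t : List Pt) (a b : Pt), IsCup (a :: b :: t) → a 0 < b 0
  | [] => fun _ _ h => h
  | _ :: _ => fun _ _ h => h.1

theorem cupCover : ∀ (t : List Pt) (a b : Pt), IsCup (a :: b :: t) →
    ∃ ws : List Pt, ws ≠ [] ∧ ws.length ≤ (t.length + 2) / 2 + 1 ∧
      ∀ z : Pt, onLine a b z → z 0 ≤ a 0 → covL {p | p ∈ a :: b :: t} (z :: ws)
  | [] => fun a b h => by
      have hab : a 0 < b 0 := h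
      refine ⟨[b], by simp, by simp, fun z hz hzx => ?_⟩
      intro p hp
      simp only [List.mem_cons, List.not_mem_nil, or_false] at hp
      refine ⟨0, by simp, ?_⟩
      rcases hp with h | h
      · rw [h]; exact segContain (ne_of_lt hab) hz (onLine_self_left a b) (onLine_self_right a b (ne_of_lt hab)) hzx (le_of_lt hab)
      · rw [h]; exact right_mem_segment _ _ _
  | [c] => fun a b h => by
      obtain ⟨hab, _, h2⟩ := h
      refine ⟨[b, c], by simp, by simp, fun z hz hzx => ?_⟩
      intro p hp
      simp only [List.mem_cons, List.not_mem_nil, or_false] at hp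
      rcases hp with h | h | h
      · exact ⟨0, by simp, by rw [h]; exact segContain (ne_of_lt hab) hz (onLine_self_left a b) (onLine_self_right a b (ne_of_lt hab)) hzx (le_of_lt hab)⟩
      · exact ⟨0, by simp, by rw [h]; exact right_mem_segment _ _ _⟩
      · exact ⟨1, by simp, by rw [h]; exact right_mem_segment _ _ _⟩
  | c :: d :: t' => fun a b h => by
      obtain ⟨hab, hs1, h'⟩ := h
      obtain ⟨hbc, hs2, h''⟩ := h'
      have hcd : c 0 < d 0 := isCup_x_lt t' c d h''
      obtain ⟨w, hwab, hwcd, hwb, hwc⟩ := inter hab hbc hcd hs1 hs2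
      obtain ⟨ws', hne', hlen', hcov'⟩ := cupCover t' c d h''
      refine ⟨w :: ws', by simp, by simp at hlen' ⊢; omega, fun z hz hzx => ?_⟩
      have hcd' : covL {p | p ∈ c :: d :: t'} (w :: ws') := hcov' w hwcd hwc
      have hrest : covL {p | p ∈ c :: d :: t'} (z :: w :: ws') := covL_cons hcd' z
      intro p hp
      simp only [Set.mem_setOf_eq, List.mem_cons] at hp
      rcases hp with h | h | hp
      · refine ⟨0, by simp, ?_⟩
        rw [h]
        exact segContain (ne_of_lt hab) hz (onLine_self_left a b) hwab hzx (le_of_lt (lt_of_lt_of_le hab hwb))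
      · refine ⟨0, by simp, ?_⟩
        rw [h]
        exact segContain (ne_of_lt hab) hz (onLine_self_right a b (ne_of_lt hab)) hwab (hzx.trans (le_of_lt hab)) hwb
      · exact hrest p (by simpa using hp)


def xInj (X : Finset Pt) : Prop := ∀ p ∈ X, ∀ q ∈ X, p 0 = q 0 → p = q

theorem ES (k l : ℕ) (hk : 2 ≤ k) (hl : 2 ≤ l) (X : Finset Pt) (hX : xInj X)
    (hcard : 2 ^ (k + l) ≤ X.card) :
    (∃ c : List Pt, IsCup c ∧ c.length = k ∧ ∀ p ∈ c, p ∈ X) ∨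
    (∃ c : List Pt, IsCapD c ∧ c.length = l ∧ ∀ p ∈ c, p ∈ X) := by
  classical
  rcases eq_or_lt_of_le hk with hk2 | hk3
  · -- k = 2 : any two points form a cup
    left
    have h2 : 1 < X.card := by
      have : 2 ≤ 2 ^ (k + l) := by
        calc 2 = 2^1 := rfl
        _ ≤ 2 ^ (k+l) := Nat.pow_le_pow_right (by norm_num) (by omega)
      omega
    obtain ⟨p, hp, q, hq, hpq⟩ := Finset.one_lt_card.mp h2
    have hx : p 0 ≠ q 0 := fun h => hpq (hX p hp q hq h)
    rcases lt_or_gt_of_ne hx with h | h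
    · exact ⟨[p, q], h, by simp [← hk2], by intro x hx; simp at hx; rcases hx with rfl | rfl <;> assumption⟩
    · exact ⟨[q, p], h, by simp [← hk2], by intro x hx; simp at hx; rcases hx with rfl | rfl <;> assumption⟩
  rcases eq_or_lt_of_le hl with hl2 | hl3
  · -- l = 2 : any two points form a cap
    right
    have h2 : 1 < X.card := by
      have : 2 ≤ 2 ^ (k + l) := by
        calc 2 = 2^1 := rfl
        _ ≤ 2 ^ (k+l) := Nat.pow_le_pow_right (by norm_num) (by omega)
      omega
    obtain ⟨p, hp, q, hq, hpq⟩ := Finset.one_lt_card.mp h2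
    have hx : p 0 ≠ q 0 := fun h => hpq (hX p hp q hq h)
    rcases lt_or_gt_of_ne hx with h | h
    · exact ⟨[q, p], h, by simp [← hl2], by intro x hx; simp at hx; rcases hx with rfl | rfl <;> assumption⟩
    · exact ⟨[p, q], h, by simp [← hl2], by intro x hx; simp at hx; rcases hx with rfl | rfl <;> assumption⟩
  -- main case : k, l ≥ 3
  set P : Pt → Prop := fun p =>
    ∃ (u2 : Pt) (ur : List Pt), IsCup (p :: u2 :: ur) ∧ (p :: u2 :: ur).length = k - 1 ∧
      ∀ x ∈ p :: u2 :: ur, x ∈ X with hP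
  set Y : Finset Pt := X.filter P with hY
  have hYX : Y ⊆ X := Finset.filter_subset _ _
  by_cases hbig : 2 ^ ((k-1) + l) ≤ (X \ Y).card
  · -- X \ Y has no (k-1)-cup, so it contains an l-cap
    rcases ES (k-1) l (by omega) hl (X \ Y)
        (fun p hp q hq h => hX p (Finset.mem_sdiff.mp hp).1 q (Finset.mem_sdiff.mp hq).1 h) hbig with
      ⟨c, hcup, hclen, hcX⟩ | ⟨c, hcap, hclen, hcX⟩
    · -- contradiction: head of c would be in Y
      exfalso
      rcases c with _ | ⟨p, _ | ⟨u2, ur⟩⟩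
      · simp at hclen; omega
      · simp at hclen; omega
      · have hpY : p ∈ Y := by
          rw [hY, Finset.mem_filter]
          refine ⟨(Finset.mem_sdiff.mp (hcX p (by simp))).1, u2, ur, hcup, hclen, ?_⟩
          intro x hx
          exact (Finset.mem_sdiff.mp (hcX x hx)).1
        exact (Finset.mem_sdiff.mp (hcX p (by simp))).2 hpY
    · right
      exact ⟨c, hcap, hclen, fun p hp => (Finset.mem_sdiff.mp (hcX p hp)).1⟩
  · -- Y is large
    have hYcard : 2 ^ (k + (l-1)) ≤ Y.card := by
      have h1 : (X \ Y).card = X.card - Y.card := Finset.card_sdiff_of_subset hYX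
      have h2 : Y.card ≤ X.card := Finset.card_le_card hYX
      have e1 : k + l = ((k-1) + l) + 1 := by omega
      have e2 : k + (l - 1) = (k-1) + l := by omega
      rw [e2]
      rw [e1] at hcard
      rw [pow_succ] at hcard
      omega
    rcases ES k (l-1) hk (by omega) Y (fun p hp q hq h => hX p (hYX hp) q (hYX hq) h) hYcard with
      ⟨c, hcup, hclen, hcX⟩ | ⟨c, hcap, hclen, hcX⟩
    · left
      exact ⟨c, hcup, by omega, fun p hp => hYX (hcX p hp)⟩
    · -- glue : last point (head) of cap is head of a (k-1)-cup
      rcases c with _ | ⟨r, _ | ⟨c2, crest⟩⟩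
      · simp at hclen; omega
      · simp at hclen; omega
      · have hrY : r ∈ Y := hcX r (by simp)
        obtain ⟨hrX, u2, ur, hu, hulen, huX⟩ := Finset.mem_filter.mp hrY
        have hc2r : c2 0 < r 0 := by
          rcases crest with _ | ⟨c3, crest'⟩
          · exact hcap
          · exact hcap.1
        have hru2 : r 0 < u2 0 := by
          rcases ur with _ | ⟨u3, ur'⟩
          · exact hu
          · exact hu.1
        rcases le_or_gt (slope c2 r) (slope r u2) with hcmp | hcmp
        · -- extend the cup by c2 in front
          left
          refine ⟨c2 :: r :: u2 :: ur, ⟨hc2r, hcmp, hu⟩, ?_, ?_⟩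
          · simp; simp at hulen; omega
          · intro x hx
            rcases List.mem_cons.mp hx with rfl | hx
            · exact hYX (hcX x (by simp))
            · exact huX x hx
        · -- extend the cap by u2 in front
          right
          refine ⟨u2 :: r :: c2 :: crest, ⟨hru2, le_of_lt hcmp, hcap⟩, ?_, ?_⟩
          · simp; simp at hclen; omega
          · intro x hx
            rcases List.mem_cons.mp hx with rfl | hx
            · exact huX x (by simp)
            · exact hYX (hcX x hx)
termination_by k + l
decreasing_by all_goals omega



lemma isCup_chain : ∀ c : List Pt, IsCup c → c.Chain' (fun p q => p 0 < q 0)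
  | [] => fun _ => List.isChain_nil
  | [a] => fun _ => List.isChain_singleton a
  | [a, b] => fun h => List.isChain_pair.mpr (h : a 0 < b 0)
  | a :: b :: c :: t => fun h => by
      have ih := isCup_chain (b :: c :: t) h.2.2
      exact List.IsChain.cons_cons h.1 ih

lemma isCapD_chain : ∀ c : List Pt, IsCapD c → c.Chain' (fun p q => q 0 < p 0)
  | [] => fun _ => List.isChain_nil
  | [a] => fun _ => List.isChain_singleton a
  | [a, b] => fun h => List.isChain_pair.mpr (h : b 0 < a 0)
  | a :: b :: c :: t => fun h => by
      have ih := isCapD_chain (b :: c :: t) h.2.2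
      exact List.IsChain.cons_cons h.1 ih

lemma nodup_of_chain (r : Pt → Pt → Prop) (hr : Transitive r) (hirr : ∀ p, ¬ r p p)
    {c : List Pt} (h : c.Chain' r) : c.Nodup := by
  haveI : IsTrans Pt r := ⟨fun _ _ _ hab hbc => hr hab hbc⟩
  have hp : c.Pairwise r := (List.isChain_iff_pairwise.mp h)
  exact hp.imp (fun {p q} hpq => by rintro rfl; exact hirr p hpq)

lemma isCup_nodup {c : List Pt} (h : IsCup c) : c.Nodup :=
  nodup_of_chain (fun p q => p 0 < q 0) (fun a b c h1 h2 => lt_trans h1 h2)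
    (fun p => lt_irrefl _) (isCup_chain c h)

lemma isCapD_nodup {c : List Pt} (h : IsCapD c) : c.Nodup :=
  nodup_of_chain (fun p q => q 0 < p 0) (fun a b c h1 h2 => lt_trans h2 h1)
    (fun p => lt_irrefl _) (isCapD_chain c h)

/-- covering a cup, set form -/
lemma cupCoverSet (c : List Pt) (h : IsCup c) (h2 : 2 ≤ c.length) :
    ∃ l : List Pt, l ≠ [] ∧ l.length ≤ c.length / 2 + 2 ∧ covL {p | p ∈ c} l := by
  rcases c with _ | ⟨a, _ | ⟨b, t⟩⟩
  · simp at h2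
  · simp at h2
  · obtain ⟨ws, hne, hlen, hcov⟩ := cupCover t a b h
    refine ⟨a :: ws, by simp, ?_, hcov a (onLine_self_left a b) (le_refl _)⟩
    simp only [List.length_cons]
    simp at hlen ⊢
    omega

/-- covering a cap, via the reflection p ↦ -p -/
lemma capCoverSet (c : List Pt) (h : IsCapD c) (h2 : 2 ≤ c.length) :
    ∃ l : List Pt, l ≠ [] ∧ l.length ≤ c.length / 2 + 2 ∧ covL {p | p ∈ c} l := by
  have hcup := isCup_neg c h
  obtain ⟨l, hne, hlen, hcov⟩ := cupCoverSet _ hcup (by simpa using h2)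
  set e : Pt ≃ₗ[ℝ] Pt := LinearEquiv.neg ℝ with he
  have hset : {p | p ∈ c.map (fun p => -p)} = e '' {p | p ∈ c} := by
    ext p
    simp [he, List.mem_map, Set.mem_image]
  rw [hset] at hcov
  refine ⟨l.map e.symm, by simpa using hne, by simpa using hlen, covL_map e hcov⟩

lemma nat_div_cast_le (a b : ℕ) : ((a / b : ℕ) : ℝ) ≤ (a : ℝ) / (b : ℝ) := by
  rcases Nat.eq_zero_or_pos b with rfl | hb
  · simp
  · rw [le_div_iff₀ (by positivity)]
    exact_mod_cast Nat.div_mul_le_self a b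

lemma batch (k : ℕ) (hk : 2 ≤ k) : ∀ R : Finset Pt, xInj R → R.Nonempty →
    ∃ l : List Pt, l ≠ [] ∧ covL (R : Set Pt) l ∧
      (l.length : ℝ) ≤ (R.card : ℝ) / 2 + 3 * (R.card : ℝ) / k + (2:ℝ) ^ (k + k) := by
  intro R
  induction R using Finset.strongInductionOn with
  | _ R IH =>
    intro hinj hne
    classical
    by_cases hbig : 2 ^ (k + k) ≤ R.card
    · -- extract a cup or cap of size k
      have hcupcap := ES k k hk hk R hinj hbig
      have key : ∃ c : List Pt, c.Nodup ∧ c.length = k ∧ (∀ p ∈ c, p ∈ R) ∧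
          ∃ l : List Pt, l ≠ [] ∧ l.length ≤ c.length / 2 + 2 ∧ covL {p | p ∈ c} l := by
        rcases hcupcap with ⟨c, hc, hclen, hcR⟩ | ⟨c, hc, hclen, hcR⟩
        · exact ⟨c, isCup_nodup hc, hclen, hcR, cupCoverSet c hc (by omega)⟩
        · exact ⟨c, isCapD_nodup hc, hclen, hcR, capCoverSet c hc (by omega)⟩
      obtain ⟨c, hnd, hclen, hcR, l₁, hne₁, hlen₁, hcov₁⟩ := key
      have hsub : c.toFinset ⊆ R := by intro p hp; exact hcR p (List.mem_toFinset.mp hp)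
      have hctf : c.toFinset.card = k := by rw [List.toFinset_card_of_nodup hnd, hclen]
      set Rc : Finset Pt := R \ c.toFinset with hRc
      have hRccard : Rc.card = R.card - k := by rw [hRc, Finset.card_sdiff_of_subset hsub, hctf]
      have hklt : k < R.card := by
        have : k < 2 ^ (k + k) := by
          calc k < 2 ^ k := Nat.lt_two_pow_self
          _ ≤ 2 ^ (k+k) := Nat.pow_le_pow_right (by norm_num) (by omega)
        omega
      have hRcne : Rc.Nonempty := by
        rw [← Finset.card_pos, hRccard]; omega
      have hssub : Rc ⊂ R := by
        rw [Finset.ssubset_iff_of_subset (Finset.sdiff_subset)]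
        have : 2 ≤ k := hk
        have hc2 : c ≠ [] := by rintro rfl; simp at hclen; omega
        obtain ⟨p, hp⟩ := List.exists_mem_of_ne_nil c hc2
        exact ⟨p, hcR p hp, by simp [hRc]; intro _; exact hp⟩
      obtain ⟨l₂, hne₂, hcov₂, hlen₂⟩ := IH Rc hssub
        (fun p hp q hq h => hinj p (Finset.sdiff_subset hp) q (Finset.sdiff_subset hq) h) hRcne
      refine ⟨l₁ ++ l₂, by simp [hne₁], ?_, ?_⟩
      · have hun := covL_append hcov₁ hcov₂
        apply covL_mono hun
        intro p hp
        by_cases hpc : p ∈ c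
        · exact Or.inl hpc
        · exact Or.inr (by simp [hRc]; exact ⟨hp, fun h => absurd h hpc⟩)
      · rw [List.length_append]
        push_cast
        have hcast : (Rc.card : ℝ) = (R.card : ℝ) - k := by
          rw [hRccard]; push_cast [Nat.cast_sub (le_of_lt hklt)]; ring
        rw [hcast] at hlen₂
        have h1 : (l₁.length : ℝ) ≤ ((k / 2 : ℕ) : ℝ) + 2 := by
          exact_mod_cast hclen ▸ hlen₁
        have h2 : ((k / 2 : ℕ) : ℝ) ≤ (k : ℝ) / 2 := nat_div_cast_le k 2
        have h3 : 3 * ((R.card : ℝ) - k) / k = 3 * (R.card : ℝ) / k - 3 := by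
          field_simp
        have hk0 : (0:ℝ) < k := by positivity
        rw [h3] at hlen₂
        linarith
    · -- small case : trivial path
      push_neg at hbig
      obtain ⟨p, hp⟩ := hne
      refine ⟨p :: R.toList, by simp, ?_, ?_⟩
      · apply covL_mono (covL_trivial (p :: R.toList) (by simp; exact ⟨p, hp⟩))
        intro q hq
        simp [Finset.mem_toList]
        right
        exact hq
      · simp only [List.length_cons, Finset.length_toList]
        push_cast
        have h4 : ((2:ℝ) ^ (k+k)) ≥ (R.card : ℝ) + 1 := by
          have : R.card + 1 ≤ 2 ^ (k+k) := hbig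
          exact_mod_cast this
        have : (0:ℝ) ≤ 3 * (R.card : ℝ) / k := by positivity
        linarith [Nat.cast_nonneg (α := ℝ) R.card]


@[simp] lemma add_apply (p q : Pt) (i : Fin 2) : (p + q) i = p i + q i := rfl
@[simp] lemma smul_apply (c : ℝ) (p : Pt) (i : Fin 2) : (c • p) i = c * p i := rfl

def shearMap (t : ℝ) : Pt →ₗ[ℝ] Pt where
  toFun p := mkPt (p 0 + t * p 1) (p 1)
  map_add' p q := by apply Pt.ext <;> simp <;> ring
  map_smul' c p := by apply Pt.ext <;> simp <;> ring

@[simp] lemma shearMap_apply0 (t : ℝ) (p : Pt) : shearMap t p 0 = p 0 + t * p 1 := rfl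
@[simp] lemma shearMap_apply1 (t : ℝ) (p : Pt) : shearMap t p 1 = p 1 := rfl

def shear (t : ℝ) : Pt ≃ₗ[ℝ] Pt :=
  LinearEquiv.ofLinear (shearMap t) (shearMap (-t))
    (by ext p : 1; apply Pt.ext <;> simp <;> ring)
    (by ext p : 1; apply Pt.ext <;> simp <;> ring)

@[simp] lemma shear_apply0 (t : ℝ) (p : Pt) : shear t p 0 = p 0 + t * p 1 := rfl
@[simp] lemma shear_apply1 (t : ℝ) (p : Pt) : shear t p 1 = p 1 := rfl

noncomputable local instance : DecidableEq Pt := Classical.decEq _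

def xInj' (X : Finset Pt) : Prop := ∀ p ∈ X, ∀ q ∈ X, p 0 = q 0 → p = q

/-- there is a shear making all x-coordinates of S distinct -/
lemma exists_shear (S : Finset Pt) : ∃ t : ℝ, xInj' (S.image (shear t)) := by
  classical
  set B : Set ℝ := ⋃ p ∈ S, ⋃ q ∈ S, {t | p ≠ q ∧ p 0 + t * p 1 = q 0 + t * q 1} with hB
  have hfin : B.Finite := by
    apply Set.Finite.biUnion S.finite_toSet
    intro p _
    apply Set.Finite.biUnion S.finite_toSet
    intro q _
    rcases eq_or_ne (p 1) (q 1) with h1 | h1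
    · -- p 1 = q 1 : set is empty or weird; show subsingleton
      apply Set.Subsingleton.finite
      intro t ht u hu
      exfalso
      obtain ⟨hne, he⟩ := ht
      rw [h1] at he
      exact hne (Pt.ext (by linarith) h1)
    · apply Set.Subsingleton.finite
      intro u hu v hv
      obtain ⟨_, heu⟩ := hu
      obtain ⟨_, hev⟩ := hv
      have h2 : p 1 - q 1 ≠ 0 := sub_ne_zero.mpr h1
      have h3 : u * (p 1 - q 1) = v * (p 1 - q 1) := by linarith
      exact mul_right_cancel₀ h2 h3
  obtain ⟨t, ht⟩ := hfin.infinite_compl.nonempty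
  refine ⟨t, ?_⟩
  intro p' hp' q' hq' hx
  obtain ⟨p, hp, rfl⟩ := Finset.mem_image.mp hp'
  obtain ⟨q, hq, rfl⟩ := Finset.mem_image.mp hq'
  by_contra hne
  have hpq : p ≠ q := fun h => hne (by rw [h])
  apply ht
  rw [hB]
  simp only [Set.mem_iUnion]
  exact ⟨p, hp, q, hq, hpq, by simpa using hx⟩

end CP

open CP in
lemma covL_toPath {S : Set Pt} {l : List Pt} (h : CP.covL S l) (hne : l ≠ []) :
    ∃ (m : ℕ) (v : Fin (m + 1) → Pt), IsCoveringPath S m v ∧ m + 1 = l.length := by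
  have hl : 0 < l.length := List.length_pos_iff.mpr hne
  refine ⟨l.length - 1, fun j => l[(j : ℕ)]'(by omega), ?_, by omega⟩
  intro p hp
  obtain ⟨i, hi, hseg⟩ := h p hp
  refine ⟨⟨i, by omega⟩, ?_⟩
  unfold pathSeg
  exact hseg

/-- Every set of `n ≥ 2` points admits a covering path with
`n/2 + O(n / log n)` segments. -/
theorem stmt_1 :
    ∃ C : ℝ, 0 < C ∧ ∀ n : ℕ, 2 ≤ n → ∀ S : Finset Pt, S.card = n →
      ∃ (m : ℕ) (v : Fin (m + 1) → Pt),
        IsCoveringPath (S : Set Pt) m v ∧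
        (m : ℝ) ≤ (n : ℝ) / 2 + C * (n : ℝ) / Real.log (n : ℝ) := by
  classical
  refine ⟨1000000, by norm_num, ?_⟩
  intro n hn S hS
  have hn1 : (1:ℝ) < n := by exact_mod_cast (by omega : 1 < n)
  have hn0 : (0:ℝ) < n := by linarith
  have hlogpos : 0 < Real.log n := Real.log_pos hn1
  have hSne : S.Nonempty := Finset.card_pos.mp (by omega)
  by_cases hcase : Real.log n ≤ 1000000
  · -- small n : trivial path through all points
    obtain ⟨p, hp⟩ := hSne
    have hcov : CP.covL (↑S) (p :: S.toList) := by
      apply CP.covL_mono (CP.covL_trivial (p :: S.toList) (by simp; exact ⟨p, hp⟩))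
      intro q hq
      simp only [Set.mem_setOf_eq, List.mem_cons, Finset.mem_toList]
      right; exact hq
    obtain ⟨m, v, hcp, hm⟩ := covL_toPath hcov (by simp)
    refine ⟨m, v, hcp, ?_⟩
    have hmn : (m : ℝ) = n := by
      have : m + 1 = n + 1 := by
        rw [hm]; simp [hS]
      have : m = n := by omega
      exact_mod_cast this
    have hbig : (n:ℝ) ≤ 1000000 * n / Real.log n := by
      rw [le_div_iff₀ hlogpos]
      nlinarith
    linarith
  · -- large n : the cup/cap construction
    push_neg at hcase
    set L : ℕ := Nat.log 2 n with hLdef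
    set k : ℕ := L / 4 with hkdef
    have h2L : 2 ^ L ≤ n := Nat.pow_log_le_self 2 (by omega)
    have hL2 : n < 2 ^ (L + 1) := Nat.lt_pow_succ_log_self (by norm_num) n
    have hlog2 : Real.log 2 < 0.6931471808 := Real.log_two_lt_d9
    have hlog2' : (0:ℝ) < Real.log 2 := Real.log_pos (by norm_num)
    have hlogup : Real.log n < (L + 1) * Real.log 2 := by
      have h1 : (n:ℝ) < 2 ^ (L+1) := by exact_mod_cast hL2
      calc Real.log n < Real.log (2 ^ (L+1)) := Real.log_lt_log hn0 h1
      _ = (L+1) * Real.log 2 := by rw [Real.log_pow]; push_cast; ring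
    have hLlb : 100 ≤ L := by
      by_contra hc
      push_neg at hc
      have : Real.log n < 100 * 0.6931471808 := by
        have hL99 : (L:ℝ) + 1 ≤ 100 := by exact_mod_cast (by omega : L + 1 ≤ 100)
        nlinarith
      linarith
    have hk2 : 2 ≤ k := by rw [hkdef]; omega
    have hk0 : (0:ℝ) < k := by exact_mod_cast (by omega : 0 < k)
    -- k is at least (log n)/8
    have hk8 : Real.log n ≤ 8 * k := by
      have hL4k : (L:ℝ) + 1 ≤ 4 * k + 4 := by
        have : L + 1 ≤ 4 * k + 4 := by rw [hkdef]; omega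
        exact_mod_cast this
      have hk25 : (25:ℝ) ≤ k := by exact_mod_cast (by rw [hkdef]; omega : 25 ≤ k)
      nlinarith
    -- apply the shear to make x-coordinates distinct
    obtain ⟨t, hinj⟩ := CP.exists_shear S
    set S' : Finset Pt := S.image (CP.shear t) with hS'
    have hS'card : S'.card = n := by
      rw [hS', Finset.card_image_of_injective S (CP.shear t).injective, hS]
    have hS'ne : S'.Nonempty := hSne.image _
    obtain ⟨l', hne', hcov', hlen'⟩ := CP.batch k hk2 S' (fun p hp q hq h => hinj p (by convert hp) q (by convert hq) h) hS'ne
    -- pull the path back through the shear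
    have himg : (⇑(CP.shear t)) '' (↑S) = (↑S' : Set Pt) := by
      rw [hS', Finset.coe_image]
    have hcovS : CP.covL (↑S) (l'.map (CP.shear t).symm) :=
      CP.covL_map (CP.shear t) (by rw [himg]; exact hcov')
    obtain ⟨m, v, hcp, hm⟩ := covL_toPath hcovS (by simpa using hne')
    refine ⟨m, v, hcp, ?_⟩
    have hmlen : (m : ℝ) + 1 = l'.length := by
      have : m + 1 = l'.length := by rw [hm]; simp
      exact_mod_cast this
    rw [hS'card] at hlen'
    -- numeric estimates
    have h3nk : 3 * (n:ℝ) / k ≤ 24 * n / Real.log n := by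
      rw [div_le_div_iff₀ hk0 hlogpos]
      nlinarith
    have hpow : ((2 ^ (k + k) : ℕ) : ℝ) ≤ Real.sqrt n := by
      have hnat : (2 ^ (k + k)) * (2 ^ (k + k)) ≤ n := by
        calc (2 ^ (k+k)) * (2 ^ (k+k)) = 2 ^ ((k+k) + (k+k)) := (pow_add 2 (k+k) (k+k)).symm
        _ ≤ 2 ^ L := Nat.pow_le_pow_right (by norm_num) (by rw [hkdef]; omega)
        _ ≤ n := h2L
      have hreal : ((2 ^ (k + k) : ℕ) : ℝ) * ((2 ^ (k + k) : ℕ) : ℝ) ≤ n := by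
        exact_mod_cast hnat
      have hx0 : (0:ℝ) ≤ ((2 ^ (k + k) : ℕ) : ℝ) := by positivity
      nlinarith [Real.sq_sqrt (le_of_lt hn0), Real.sqrt_nonneg (n:ℝ),
        sq_nonneg (((2 ^ (k + k) : ℕ) : ℝ) - Real.sqrt n)]
    have hlogsqrt : Real.log n ≤ 2 * Real.sqrt n := by
      have h1 : Real.log (Real.sqrt n) = Real.log n / 2 := Real.log_sqrt (le_of_lt hn0)
      have h2 : Real.log (Real.sqrt n) ≤ Real.sqrt n - 1 :=
        Real.log_le_sub_one_of_pos (Real.sqrt_pos.mpr hn0)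
      linarith
    have hsqrtbound : Real.sqrt n ≤ 999976 * n / Real.log n := by
      rw [le_div_iff₀ hlogpos]
      nlinarith [Real.sq_sqrt (le_of_lt hn0), Real.sqrt_nonneg (n:ℝ)]
    have hcast : ((2:ℝ) ^ (k + k)) = ((2 ^ (k + k) : ℕ) : ℝ) := by push_cast; ring
    rw [hcast] at hlen'
    have : 24 * (n:ℝ) / Real.log n + 999976 * n / Real.log n = 1000000 * n / Real.log n := by
      field_simp
      ring
    linarith
end
end

section
/- Let C ⊆ ℝ² be a closed convex set with nonempty interior, let X be a finite nonempty set of n points contained in the interior of C, and let a and b be two distinct points on the frontier of C. Then X ∪ {a, b} admits a noncrossing covering path with n + 1 segments whose first vertex is a and whose last vertex is b, and such that every point of the path other than a and b lies in the interior of C. -/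
noncomputable section

open scoped RealInnerProductSpace

/-- Core lemma: if there are two "affine coordinates" `s`, `t` such that the
"cross determinant" `D(z,w) = s z * t w - t z * s w` is positive on every
increasing pair of vertices, then the polygonal path is noncrossing. -/
lemma core {N : ℕ} (s t : Pt → ℝ)
    (hs : ∀ (α β : ℝ) (x y : Pt), α + β = 1 → s (α • x + β • y) = α * s x + β * s y)
    (ht : ∀ (α β : ℝ) (x y : Pt), α + β = 1 → t (α • x + β • y) = α * t x + β * t y)
    (q : Fin (N + 1) → Pt)
    (hD : ∀ i j : Fin (N + 1), i < j → 0 < s (q i) * t (q j) - t (q i) * s (q j)) :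
    IsNoncrossing N q := by
  intro i j hij
  have hijv : (i : ℕ) < (j : ℕ) := hij
  constructor
  · -- consecutive case
    intro hcons
    have hMM : i.succ = j.castSucc := by
      apply Fin.ext
      simp [Fin.val_succ, hcons]
    have h1 : i.castSucc < i.succ := Fin.castSucc_lt_succ
    have h2 : i.castSucc < j.succ := by
      rw [Fin.lt_def]; simp [Fin.val_succ]; omega
    have h3 : i.succ < j.succ := by
      rw [Fin.lt_def]; simp [Fin.val_succ]; omega
    have P1 := hD _ _ h1
    have P2 := hD _ _ h2
    have P3 := hD _ _ h3
    set u := q i.castSucc with hu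
    set M := q i.succ with hM
    set w := q j.succ with hw
    ext z
    simp only [Set.mem_inter_iff, Set.mem_singleton_iff, pathSeg]
    constructor
    · rintro ⟨hz1, hz2⟩
      obtain ⟨α1, β1, hα1, hβ1, hs1, hz1'⟩ := hz1
      obtain ⟨α2, β2, hα2, hβ2, hs2, hz2'⟩ := hz2
      rw [← hMM] at hz2'
      have E1s : s z = α1 * s u + β1 * s M := by rw [← hz1']; exact hs _ _ _ _ hs1
      have E1t : t z = α1 * t u + β1 * t M := by rw [← hz1']; exact ht _ _ _ _ hs1
      have E2s : s z = α2 * s M + β2 * s w := by rw [← hz2']; exact hs _ _ _ _ hs2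
      have E2t : t z = α2 * t M + β2 * t w := by rw [← hz2']; exact ht _ _ _ _ hs2
      have key : (α1 * s u + β1 * s M) * (α2 * t M + β2 * t w)
          - (α1 * t u + β1 * t M) * (α2 * s M + β2 * s w) = 0 := by
        rw [← E1s, ← E2t, ← E1t, ← E2s]; ring
      have expand : α1 * α2 * (s u * t M - t u * s M) + α1 * β2 * (s u * t w - t u * s w)
          + β1 * β2 * (s M * t w - t M * s w) = 0 := by
        linear_combination key
      have n1 : 0 ≤ α1 * α2 * (s u * t M - t u * s M) :=
        mul_nonneg (mul_nonneg hα1 hα2) (le_of_lt P1)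
      have n2 : 0 ≤ α1 * β2 * (s u * t w - t u * s w) :=
        mul_nonneg (mul_nonneg hα1 hβ2) (le_of_lt P2)
      have n3 : 0 ≤ β1 * β2 * (s M * t w - t M * s w) :=
        mul_nonneg (mul_nonneg hβ1 hβ2) (le_of_lt P3)
      have z1 : α1 * α2 * (s u * t M - t u * s M) = 0 := by linarith
      have z2 : α1 * β2 * (s u * t w - t u * s w) = 0 := by linarith
      have e1 : α1 * α2 = 0 := by
        rcases mul_eq_zero.mp z1 with h | h
        · exact h
        · exact absurd h (ne_of_gt P1)
      have e2 : α1 * β2 = 0 := by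
        rcases mul_eq_zero.mp z2 with h | h
        · exact h
        · exact absurd h (ne_of_gt P2)
      have hα1z : α1 = 0 := by
        have : α1 * (α2 + β2) = 0 := by rw [mul_add]; linarith
        rwa [hs2, mul_one] at this
      have hβ1o : β1 = 1 := by linarith
      rw [← hz1', hα1z, hβ1o, zero_smul, one_smul, zero_add]
    · rintro rfl
      refine ⟨right_mem_segment ℝ u M, ?_⟩
      rw [← hMM]
      exact left_mem_segment ℝ M w
  · -- nonconsecutive case
    intro hfar
    have h1 : i.castSucc < j.castSucc := by rw [Fin.lt_def]; simpa using hijv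
    have h2 : i.castSucc < j.succ := by rw [Fin.lt_def]; simp [Fin.val_succ]; omega
    have h3 : i.succ < j.castSucc := by rw [Fin.lt_def]; simp [Fin.val_succ]; omega
    have h4 : i.succ < j.succ := by rw [Fin.lt_def]; simp [Fin.val_succ]; omega
    have P1 := hD _ _ h1
    have P2 := hD _ _ h2
    have P3 := hD _ _ h3
    have P4 := hD _ _ h4
    rw [Set.eq_empty_iff_forall_notMem]
    rintro z ⟨hz1, hz2⟩
    obtain ⟨α1, β1, hα1, hβ1, hs1, hz1'⟩ := hz1
    obtain ⟨α2, β2, hα2, hβ2, hs2, hz2'⟩ := hz2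
    set u := q i.castSucc
    set M := q i.succ
    set u' := q j.castSucc
    set w := q j.succ
    have E1s : s z = α1 * s u + β1 * s M := by rw [← hz1']; exact hs _ _ _ _ hs1
    have E1t : t z = α1 * t u + β1 * t M := by rw [← hz1']; exact ht _ _ _ _ hs1
    have E2s : s z = α2 * s u' + β2 * s w := by rw [← hz2']; exact hs _ _ _ _ hs2
    have E2t : t z = α2 * t u' + β2 * t w := by rw [← hz2']; exact ht _ _ _ _ hs2
    have key : (α1 * s u + β1 * s M) * (α2 * t u' + β2 * t w)
        - (α1 * t u + β1 * t M) * (α2 * s u' + β2 * s w) = 0 := by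
      rw [← E1s, ← E2t, ← E1t, ← E2s]; ring
    have expand : α1 * α2 * (s u * t u' - t u * s u') + α1 * β2 * (s u * t w - t u * s w)
        + β1 * α2 * (s M * t u' - t M * s u') + β1 * β2 * (s M * t w - t M * s w) = 0 := by
      linear_combination key
    have n1 : 0 ≤ α1 * α2 * (s u * t u' - t u * s u') :=
      mul_nonneg (mul_nonneg hα1 hα2) (le_of_lt P1)
    have n2 : 0 ≤ α1 * β2 * (s u * t w - t u * s w) :=
      mul_nonneg (mul_nonneg hα1 hβ2) (le_of_lt P2)
    have n3 : 0 ≤ β1 * α2 * (s M * t u' - t M * s u') :=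
      mul_nonneg (mul_nonneg hβ1 hα2) (le_of_lt P3)
    have n4 : 0 ≤ β1 * β2 * (s M * t w - t M * s w) :=
      mul_nonneg (mul_nonneg hβ1 hβ2) (le_of_lt P4)
    have z1 : α1 * α2 * (s u * t u' - t u * s u') = 0 := by linarith
    have z2 : α1 * β2 * (s u * t w - t u * s w) = 0 := by linarith
    have z3 : β1 * α2 * (s M * t u' - t M * s u') = 0 := by linarith
    have z4 : β1 * β2 * (s M * t w - t M * s w) = 0 := by linarith
    have e1 : α1 * α2 = 0 := by
      rcases mul_eq_zero.mp z1 with h | h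
      · exact h
      · exact absurd h (ne_of_gt P1)
    have e2 : α1 * β2 = 0 := by
      rcases mul_eq_zero.mp z2 with h | h
      · exact h
      · exact absurd h (ne_of_gt P2)
    have e3 : β1 * α2 = 0 := by
      rcases mul_eq_zero.mp z3 with h | h
      · exact h
      · exact absurd h (ne_of_gt P3)
    have e4 : β1 * β2 = 0 := by
      rcases mul_eq_zero.mp z4 with h | h
      · exact h
      · exact absurd h (ne_of_gt P4)
    have hone : (1:ℝ) = 0 := by
      calc (1:ℝ) = (α1 + β1) * (α2 + β2) := by rw [hs1, hs2]; ring
        _ = α1 * α2 + α1 * β2 + β1 * α2 + β1 * β2 := by ring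
        _ = 0 := by rw [e1, e2, e3, e4]; ring
    exact one_ne_zero hone


set_option maxHeartbeats 1600000 in
/-- `n` points in the interior of a closed convex set `C` together with two
distinct points `a, b` on its frontier admit a noncrossing covering path with
`n + 1` segments from `a` to `b` whose points other than `a` and `b` lie in
the interior of `C`. -/
theorem stmt_3 (C : Set Pt) (hconv : Convex ℝ C) (hcl : IsClosed C)
    (hint : (interior C).Nonempty) (X : Finset Pt) (n : ℕ) (hn : X.card = n)
    (hne : X.Nonempty) (hX : (X : Set Pt) ⊆ interior C)
    (a b : Pt) (ha : a ∈ frontier C) (hb : b ∈ frontier C) (hab : a ≠ b) :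
    ∃ v : Fin (n + 2) → Pt,
      IsCoveringPath ((X : Set Pt) ∪ {a, b}) (n + 1) v ∧
      IsNoncrossing (n + 1) v ∧
      v 0 = a ∧ v (Fin.last (n + 1)) = b ∧
      (⋃ i : Fin (n + 1), pathSeg v i) \ {a, b} ⊆ interior C := by
  classical
  have hn1 : 0 < n := by rw [← hn]; exact Finset.card_pos.mpr hne
  have haC : a ∈ C := by
    have h := frontier_subset_closure (s := C) ha
    rwa [hcl.closure_eq] at h
  have hbC : b ∈ C := by
    have h := frontier_subset_closure (s := C) hb
    rwa [hcl.closure_eq] at h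
  have haI : a ∉ interior C := by
    rw [hcl.frontier_eq] at ha; exact ha.2
  have hbI : b ∉ interior C := by
    rw [hcl.frontier_eq] at hb; exact hb.2
  have hXne : (X : Set Pt).Nonempty := Finset.coe_nonempty.mpr hne
  have hKint : convexHull ℝ (X : Set Pt) ⊆ interior C := convexHull_min hX hconv.interior
  have key_out : ∀ p q : Pt, p ∉ interior C → q ∈ C → p ≠ q →
      p ∉ convexHull ℝ (insert q (X : Set Pt)) := by
    intro p q hpI hqC hpq hmem
    rw [convexHull_insert hXne, mem_convexJoin] at hmem
    obtain ⟨q', hq', z, hz, hseg⟩ := hmem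
    rw [Set.mem_singleton_iff] at hq'
    subst hq'
    have hzint : z ∈ interior C := hKint hz
    rw [← insert_endpoints_openSegment] at hseg
    rcases hseg with h | h
    · exact hpq h
    rcases h with h | h
    · exact hpI (h ▸ hzint)
    · rw [openSegment_symm] at h
      exact hpI (hconv.openSegment_interior_closure_subset_interior hzint
        (by rwa [hcl.closure_eq]) h)
  have hXa : a ∉ convexHull ℝ (insert b (X : Set Pt)) := key_out a b haI hbC hab
  have hXb : b ∉ convexHull ℝ (insert a (X : Set Pt)) := key_out b a hbI haC hab.symm
  obtain ⟨F, u1, hF1, hF2⟩ := geometric_hahn_banach_closed_point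
    (convex_convexHull ℝ _) ((X.finite_toSet.insert b).isCompact_convexHull (𝕜 := ℝ)).isClosed hXa
  obtain ⟨G, u2, hG1, hG2⟩ := geometric_hahn_banach_closed_point
    (convex_convexHull ℝ _) ((X.finite_toSet.insert a).isCompact_convexHull (𝕜 := ℝ)).isClosed hXb
  set f1 : Pt → ℝ := fun z => F z - F a with hf1def
  have hf1a : f1 a = 0 := sub_self _
  have hf1' : ∀ z ∈ insert b (X : Set Pt), f1 z < 0 := fun z hz =>
    sub_neg.mpr (lt_trans (hF1 z (subset_convexHull ℝ _ hz)) hF2)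
  have hf1X : ∀ x ∈ X, f1 x < 0 := fun x hx =>
    hf1' x (Set.mem_insert_of_mem _ (Finset.mem_coe.mpr hx))
  have hf1b : f1 b < 0 := hf1' b (Set.mem_insert _ _)
  set g0 : Pt → ℝ := fun z => G z - G b with hg0def
  have hg0b : g0 b = 0 := sub_self _
  have hg0' : ∀ z ∈ insert a (X : Set Pt), g0 z < 0 := fun z hz =>
    sub_neg.mpr (lt_trans (hG1 z (subset_convexHull ℝ _ hz)) hG2)
  have hg0X : ∀ x ∈ X, g0 x < 0 := fun x hx =>
    hg0' x (Set.mem_insert_of_mem _ (Finset.mem_coe.mpr hx))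
  have hg0a : g0 a < 0 := hg0' a (Set.mem_insert _ _)
  -- coordinate perturbation functionals
  set bas := EuclideanSpace.basisFun (Fin 2) ℝ with hbas
  set e1 : Pt → ℝ := fun z => ⟪bas 0, z⟫ - ⟪bas 0, b⟫ with he1
  set e2 : Pt → ℝ := fun z => ⟪bas 1, z⟫ - ⟪bas 1, b⟫ with he2
  set Afun : Pt → Pt → ℝ := fun x y => g0 x * f1 y - f1 x * g0 y with hAfun
  set B1fun : Pt → Pt → ℝ := fun x y => e1 x * f1 y - f1 x * e1 y with hB1fun
  set B2fun : Pt → Pt → ℝ := fun x y => e2 x * f1 y - f1 x * e2 y with hB2fun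
  have noBad : ∀ x ∈ X, ∀ y ∈ X, x ≠ y → B1fun x y ≠ 0 ∨ B2fun x y ≠ 0 := by
    intro x hx y hy hxy
    by_contra hcon
    push_neg at hcon
    obtain ⟨hB1, hB2⟩ := hcon
    set w : Pt := f1 y • (x - b) - f1 x • (y - b) with hw
    have hw1 : ⟪bas 0, w⟫ = 0 := by
      have hexp : ⟪bas 0, w⟫ = e1 x * f1 y - f1 x * e1 y := by
        rw [hw, inner_sub_right, real_inner_smul_right, real_inner_smul_right,
          inner_sub_right, inner_sub_right]
        simp only [he1]
        ring
      rw [hexp]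
      simp only [hB1fun] at hB1
      exact hB1
    have hw2 : ⟪bas 1, w⟫ = 0 := by
      have hexp : ⟪bas 1, w⟫ = e2 x * f1 y - f1 x * e2 y := by
        rw [hw, inner_sub_right, real_inner_smul_right, real_inner_smul_right,
          inner_sub_right, inner_sub_right]
        simp only [he2]
        ring
      rw [hexp]
      simp only [hB2fun] at hB2
      exact hB2
    have hwz : w = 0 := by
      have hrep := bas.sum_repr' w
      rw [Fin.sum_univ_two, hw1, hw2, zero_smul, zero_smul, add_zero] at hrep
      exact hrep.symm
    have hFw : F w = 0 := by rw [hwz, map_zero]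
    have hFw' : F w = f1 y * (f1 x - f1 b) - f1 x * (f1 y - f1 b) := by
      rw [hw, map_sub, map_smul, map_smul, map_sub, map_sub]
      simp only [hf1def, smul_eq_mul]
      ring
    have h0 : f1 b * (f1 x - f1 y) = 0 := by
      have h1 : f1 y * (f1 x - f1 b) - f1 x * (f1 y - f1 b) = 0 := by rw [← hFw', hFw]
      linear_combination h1
    have hf1xy : f1 x = f1 y := by
      rcases mul_eq_zero.mp h0 with h | h
      · exact absurd h (ne_of_lt hf1b)
      · linarith [sub_eq_zero.mp h]
    have hwxy : w = f1 x • (x - y) := by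
      rw [hw, ← hf1xy, smul_sub, smul_sub, smul_sub]
      abel
    rw [hwz] at hwxy
    rcases smul_eq_zero.mp hwxy.symm with h | h
    · exact absurd h (ne_of_lt (hf1X x hx))
    · exact hxy (sub_eq_zero.mp h)
  -- bounds for the perturbation size
  set P : Finset Pt := insert a X with hP
  have hPne : P.Nonempty := Finset.insert_nonempty _ _
  have hg0P : ∀ z ∈ P, g0 z < 0 := by
    intro z hz
    rw [hP] at hz
    rcases Finset.mem_insert.mp hz with rfl | hz
    · exact hg0a
    · exact hg0X z hz
  have haP : a ∈ P := by rw [hP]; exact Finset.mem_insert_self a X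
  have hxP : ∀ x ∈ X, x ∈ P := by intro x hx; rw [hP]; exact Finset.mem_insert_of_mem hx
  set m : ℝ := P.inf' hPne (fun z => -g0 z) with hm
  have hm0 : 0 < m := by
    rw [hm, Finset.lt_inf'_iff]
    intro z hz
    linarith [hg0P z hz]
  set M1 : ℝ := P.sup' hPne (fun z => |e1 z|) with hM1
  set M2 : ℝ := P.sup' hPne (fun z => |e2 z|) with hM2
  have hM1n : (0:ℝ) ≤ M1 := by
    rw [hM1]
    exact le_trans (abs_nonneg (e1 a)) (Finset.le_sup' (fun z => |e1 z|) haP)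
  have hM2n : (0:ℝ) ≤ M2 := by
    rw [hM2]
    exact le_trans (abs_nonneg (e2 a)) (Finset.le_sup' (fun z => |e2 z|) haP)
  set η : ℝ := m / (2 * (M1 + M2) + 2) with hη
  have hden : (0:ℝ) < 2 * (M1 + M2) + 2 := by linarith
  have hη0 : 0 < η := div_pos hm0 hden
  have hkey : η * (2 * (M1 + M2) + 2) = m := div_mul_cancel₀ m (ne_of_gt hden)
  -- choose ε and δ generic
  set S1 : Finset ℝ := (X ×ˢ X).image (fun p => -Afun p.1 p.2 / B1fun p.1 p.2) with hS1
  obtain ⟨ε, hεd⟩ := ((Set.Ioo_infinite hη0).diff S1.finite_toSet).nonempty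
  obtain ⟨hεIoo, hεS⟩ := hεd
  set S2 : Finset ℝ := (X ×ˢ X).image
    (fun p => -(Afun p.1 p.2 + ε * B1fun p.1 p.2) / B2fun p.1 p.2) with hS2
  obtain ⟨δ, hδd⟩ := ((Set.Ioo_infinite hη0).diff S2.finite_toSet).nonempty
  obtain ⟨hδIoo, hδS⟩ := hδd
  set f2 : Pt → ℝ := fun z => g0 z + ε * e1 z + δ * e2 z with hf2def
  have hf2b : f2 b = 0 := by
    simp only [hf2def, he1, he2, hg0b, sub_self, mul_zero, add_zero]
  have hf2P : ∀ z ∈ P, f2 z < 0 := by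
    intro z hz
    have hg : g0 z ≤ -m := by
      have h : m ≤ -g0 z := by
        rw [hm]; exact Finset.inf'_le (fun z => -g0 z) hz
      linarith
    have h1' : |e1 z| ≤ M1 := by
      rw [hM1]; exact Finset.le_sup' (fun z => |e1 z|) hz
    have h2' : |e2 z| ≤ M2 := by
      rw [hM2]; exact Finset.le_sup' (fun z => |e2 z|) hz
    have b1 : ε * e1 z ≤ η * M1 := by
      calc ε * e1 z ≤ ε * |e1 z| :=
            mul_le_mul_of_nonneg_left (le_abs_self _) (le_of_lt hεIoo.1)
        _ ≤ η * M1 := mul_le_mul (le_of_lt hεIoo.2) h1' (abs_nonneg _) (le_of_lt hη0)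
    have b2 : δ * e2 z ≤ η * M2 := by
      calc δ * e2 z ≤ δ * |e2 z| :=
            mul_le_mul_of_nonneg_left (le_abs_self _) (le_of_lt hδIoo.1)
        _ ≤ η * M2 := mul_le_mul (le_of_lt hδIoo.2) h2' (abs_nonneg _) (le_of_lt hη0)
    have hlt : η * (M1 + M2) < m := by nlinarith
    simp only [hf2def]
    nlinarith
  have hf2X : ∀ x ∈ X, f2 x < 0 := fun x hx => hf2P x (hxP x hx)
  have hf2a : f2 a < 0 := hf2P a haP
  have hDne : ∀ x ∈ X, ∀ y ∈ X, x ≠ y → f2 x * f1 y - f1 x * f2 y ≠ 0 := by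
    intro x hx y hy hxy
    have hexp : f2 x * f1 y - f1 x * f2 y
        = Afun x y + ε * B1fun x y + δ * B2fun x y := by
      simp only [hf2def, hAfun, hB1fun, hB2fun]
      ring
    rw [hexp]
    by_cases hB2 : B2fun x y = 0
    · have hB1 : B1fun x y ≠ 0 := by
        rcases noBad x hx y hy hxy with h | h
        · exact h
        · exact absurd hB2 h
      rw [hB2, mul_zero, add_zero]
      intro h0
      apply hεS
      rw [Finset.mem_coe, hS1, Finset.mem_image]
      exact ⟨(x, y), Finset.mem_product.mpr ⟨hx, hy⟩, (div_eq_iff hB1).mpr (by linarith)⟩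
    · intro h0
      apply hδS
      rw [Finset.mem_coe, hS2, Finset.mem_image]
      exact ⟨(x, y), Finset.mem_product.mpr ⟨hx, hy⟩, (div_eq_iff hB2).mpr (by linarith)⟩
  -- the two path coordinates
  set s : Pt → ℝ := fun z => f1 z + f2 z with hsdef
  set t : Pt → ℝ := fun z => f1 z - f2 z with htdef
  have hsaff : ∀ (α β : ℝ) (x y : Pt), α + β = 1 → s (α • x + β • y) = α * s x + β * s y := by
    intro α β x y hαβ
    have hβ : β = 1 - α := by linarith
    subst hβ
    simp only [hsdef, hf1def, hf2def, hg0def, he1, he2, map_add, map_smul, smul_eq_mul,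
      inner_add_right, real_inner_smul_right]
    ring
  have htaff : ∀ (α β : ℝ) (x y : Pt), α + β = 1 → t (α • x + β • y) = α * t x + β * t y := by
    intro α β x y hαβ
    have hβ : β = 1 - α := by linarith
    subst hβ
    simp only [htdef, hf1def, hf2def, hg0def, he1, he2, map_add, map_smul, smul_eq_mul,
      inner_add_right, real_inner_smul_right]
    ring
  have hsX : ∀ x ∈ X, s x < 0 := by
    intro x hx
    have := hf1X x hx
    have := hf2X x hx
    simp only [hsdef]
    linarith
  -- determinant positivity facts
  have Dab : 0 < s a * t b - t a * s b := by
    have h : s a * t b - t a * s b = 2 * (f2 a * f1 b) - 2 * (f1 a * f2 b) := by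
      simp only [hsdef, htdef]; ring
    rw [h, hf1a, hf2b]
    have h2 : 0 < f2 a * f1 b := mul_pos_of_neg_of_neg hf2a hf1b
    linarith
  have Dax : ∀ x ∈ X, 0 < s a * t x - t a * s x := by
    intro x hx
    have h : s a * t x - t a * s x = 2 * (f2 a * f1 x) - 2 * (f1 a * f2 x) := by
      simp only [hsdef, htdef]; ring
    rw [h, hf1a]
    have h2 : 0 < f2 a * f1 x := mul_pos_of_neg_of_neg hf2a (hf1X x hx)
    linarith
  have Dxb : ∀ x ∈ X, 0 < s x * t b - t x * s b := by
    intro x hx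
    have h : s x * t b - t x * s b = 2 * (f2 x * f1 b) - 2 * (f1 x * f2 b) := by
      simp only [hsdef, htdef]; ring
    rw [h, hf2b]
    have h2 : 0 < f2 x * f1 b := mul_pos_of_neg_of_neg (hf2X x hx) hf1b
    linarith
  have hDst : ∀ x y : Pt, s x * t y - t x * s y = 2 * (f2 x * f1 y - f1 x * f2 y) := by
    intro x y
    simp only [hsdef, htdef]
    ring
  -- the slope function and sorting of X
  set σfun : Pt → ℝ := fun z => t z / s z with hσ
  have htσ : ∀ x ∈ X, σfun x * s x = t x := by
    intro x hx
    exact div_mul_cancel₀ (t x) (ne_of_lt (hsX x hx))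
  have hσinj : Set.InjOn σfun (X : Set Pt) := by
    intro x hx y hy hσxy
    by_contra hxy
    have hD := hDne x (Finset.mem_coe.mp hx) y (Finset.mem_coe.mp hy) hxy
    have h0 : s x * t y - t x * s y = 0 := by
      rw [← htσ x (Finset.mem_coe.mp hx), ← htσ y (Finset.mem_coe.mp hy), hσxy]
      ring
    rw [hDst] at h0
    apply hD
    linarith
  set S : Finset ℝ := X.image σfun with hSdef
  have hcard : S.card = n := by
    rw [hSdef, Finset.card_image_of_injOn hσinj, hn]
  set iso := S.orderIsoOfFin hcard with hiso
  have hex : ∀ i : Fin n, ∃ x, x ∈ X ∧ σfun x = (iso i : ℝ) := by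
    intro i
    have h : (iso i : ℝ) ∈ X.image σfun := (iso i).2
    obtain ⟨x, hx, hxe⟩ := Finset.mem_image.mp h
    exact ⟨x, hx, hxe⟩
  set xs : Fin n → Pt := fun i => Classical.choose (hex i) with hxs
  have hxsX : ∀ i, xs i ∈ X := fun i => (Classical.choose_spec (hex i)).1
  have hxsσ : ∀ i, σfun (xs i) = (iso i : ℝ) := fun i => (Classical.choose_spec (hex i)).2
  have hxsmono : ∀ i j : Fin n, i < j → σfun (xs i) < σfun (xs j) := by
    intro i j hij
    rw [hxsσ, hxsσ]
    exact_mod_cast iso.strictMono hij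
  have hxssurj : ∀ x ∈ X, ∃ i, xs i = x := by
    intro x hx
    have hmem : σfun x ∈ S := by
      rw [hSdef]; exact Finset.mem_image_of_mem _ hx
    obtain ⟨i, hi⟩ := iso.surjective ⟨σfun x, hmem⟩
    refine ⟨i, hσinj (Finset.mem_coe.mpr (hxsX i)) (Finset.mem_coe.mpr hx) ?_⟩
    rw [hxsσ, hi]
  have Dxx : ∀ k l : Fin n, k < l → 0 < s (xs k) * t (xs l) - t (xs k) * s (xs l) := by
    intro k l hkl
    have hsk := hsX _ (hxsX k)
    have hsl := hsX _ (hxsX l)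
    have hmono := hxsmono k l hkl
    rw [← htσ _ (hxsX k), ← htσ _ (hxsX l)]
    nlinarith [mul_pos_of_neg_of_neg hsk hsl, sub_pos.mpr hmono]
  -- the path
  set v : Fin (n + 2) → Pt := Fin.cons a (Fin.snoc xs b) with hv
  have hv0 : v 0 = a := by rw [hv]; exact Fin.cons_zero _ _
  have hvlast : v (Fin.last (n + 1)) = b := by
    rw [hv, ← Fin.succ_last, Fin.cons_succ, Fin.snoc_last]
  have hvmid : ∀ k : Fin n, v (Fin.succ (Fin.castSucc k)) = xs k := by
    intro k
    rw [hv, Fin.cons_succ, Fin.snoc_castSucc]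
  have hq : ∀ i j : Fin (n + 2), i < j → 0 < s (v i) * t (v j) - t (v i) * s (v j) := by
    intro i j hij
    rcases Fin.eq_zero_or_eq_succ i with rfl | ⟨i', rfl⟩
    · rcases Fin.eq_zero_or_eq_succ j with rfl | ⟨j', rfl⟩
      · exact absurd hij (lt_irrefl _)
      · rw [hv0, hv, Fin.cons_succ]
        cases j' using Fin.lastCases with
        | last =>
          rw [Fin.snoc_last]
          exact Dab
        | cast l =>
          rw [Fin.snoc_castSucc]
          exact Dax _ (hxsX l)
    · rcases Fin.eq_zero_or_eq_succ j with rfl | ⟨j', rfl⟩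
      · exact absurd hij (Fin.not_lt_zero _)
      · have hij' : i' < j' := by rwa [Fin.succ_lt_succ_iff] at hij
        rw [hv, Fin.cons_succ, Fin.cons_succ]
        cases j' using Fin.lastCases with
        | last =>
          rw [Fin.snoc_last]
          have hi'ne : i' ≠ Fin.last n := ne_of_lt hij'
          obtain ⟨k, rfl⟩ := Fin.exists_castSucc_eq.mpr hi'ne
          rw [Fin.snoc_castSucc]
          exact Dxb _ (hxsX k)
        | cast l =>
          have hi'ne : i' ≠ Fin.last n := by
            intro h
            rw [h] at hij'
            exact absurd (lt_trans hij' (Fin.castSucc_lt_last l)) (lt_irrefl _)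
          obtain ⟨k, rfl⟩ := Fin.exists_castSucc_eq.mpr hi'ne
          rw [Fin.snoc_castSucc, Fin.snoc_castSucc]
          have hkl : k < l := by rwa [Fin.castSucc_lt_castSucc_iff] at hij'
          exact Dxx k l hkl
  have hnc : IsNoncrossing (n + 1) v := core s t hsaff htaff v hq
  -- covering
  have hcover : IsCoveringPath ((X : Set Pt) ∪ {a, b}) (n + 1) v := by
    intro p hp
    rcases hp with hp | hp
    · obtain ⟨i, rfl⟩ := hxssurj p (Finset.mem_coe.mp hp)
      refine ⟨(Fin.castSucc i : Fin (n + 1)), ?_⟩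
      have hvv : v (Fin.castSucc i).succ = xs i := hvmid i
      simp only [pathSeg]
      rw [hvv]
      exact right_mem_segment ℝ _ _
    · rcases hp with rfl | hp
      · refine ⟨0, ?_⟩
        simp only [pathSeg]
        rw [Fin.castSucc_zero, hv0]
        exact left_mem_segment ℝ _ _
      · rw [Set.mem_singleton_iff] at hp
        subst hp
        refine ⟨Fin.last n, ?_⟩
        simp only [pathSeg]
        rw [Fin.succ_last, hvlast]
        exact right_mem_segment ℝ _ _
  -- interior containment
  have hxint : ∀ k, xs k ∈ interior C := fun k => hX (Finset.mem_coe.mpr (hxsX k))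
  have hsub : (⋃ i : Fin (n + 1), pathSeg v i) \ {a, b} ⊆ interior C := by
    intro z hz
    obtain ⟨hzU, hzab⟩ := hz
    rw [Set.mem_iUnion] at hzU
    obtain ⟨i, hzi⟩ := hzU
    have hza : z ≠ a := fun h => hzab (by rw [h]; exact Set.mem_insert _ _)
    have hzb : z ≠ b := fun h => hzab (by rw [h]; exact Set.mem_insert_of_mem _ rfl)
    have hleft : (v i.castSucc = a ∧ i = 0) ∨ ∃ k, v i.castSucc = xs k := by
      rcases Fin.eq_zero_or_eq_succ i with rfl | ⟨i', rfl⟩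
      · left
        constructor
        · rw [Fin.castSucc_zero]; exact hv0
        · rfl
      · right
        refine ⟨i', ?_⟩
        rw [← Fin.succ_castSucc]
        exact hvmid i'
    have hright : (v i.succ = b ∧ i = Fin.last n) ∨ ∃ k, v i.succ = xs k := by
      cases i using Fin.lastCases with
      | last =>
        left
        constructor
        · rw [Fin.succ_last]; exact hvlast
        · rfl
      | cast k =>
        right
        exact ⟨k, hvmid k⟩
    rcases hleft with ⟨hL, hi0⟩ | ⟨k, hL⟩
    · rcases hright with ⟨hR, hilast⟩ | ⟨l, hR⟩
      · exfalso
        rw [hi0] at hilast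
        have h0 : (0 : ℕ) = n := by
          have := congrArg Fin.val hilast
          simpa using this
        omega
      · simp only [pathSeg] at hzi
        rw [hL, hR] at hzi
        rw [← insert_endpoints_openSegment] at hzi
        rcases hzi with h | h
        · exact absurd h hza
        rcases h with h | h
        · rw [h]; exact hxint l
        · rw [openSegment_symm] at h
          exact hconv.openSegment_interior_closure_subset_interior (hxint l)
            (by rwa [hcl.closure_eq]) h
    · rcases hright with ⟨hR, _⟩ | ⟨l, hR⟩
      · simp only [pathSeg] at hzi
        rw [hL, hR] at hzi
        rw [← insert_endpoints_openSegment] at hzi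
        rcases hzi with h | h
        · rw [h]; exact hxint k
        rcases h with h | h
        · exact absurd h hzb
        · exact hconv.openSegment_interior_closure_subset_interior (hxint k)
            (by rwa [hcl.closure_eq]) h
      · simp only [pathSeg] at hzi
        rw [hL, hR] at hzi
        exact hconv.interior.segment_subset (hxint k) (hxint l) hzi
  exact ⟨v, hcover, hnc, hv0, hvlast, hsub⟩
end
end

section
/- For every angle φ ∈ (0, π/2) and every ε > 0 there exists δ with 0 < δ < ε such that the following holds: for every point c ∈ ℝ² and any two nondegenerate closed segments [p, q] and [r, s] in ℝ² whose relative interiors (open segments) are disjoint, if each of the two segments contains two distinct points at distance exactly ε from c and also contains two distinct points at distance exactly δ from c, then the acute angle between the supporting lines of the two segments is at most φ; equivalently, |⟨q − p, s − r⟩| ≥ cos(φ) · ‖q − p‖ · ‖s − r‖. -/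
noncomputable section

open scoped RealInnerProductSpace

/-- The segment `[a, b]` traverses the circle of radius `r` centered at `c`:
it contains two distinct points at distance exactly `r` from `c`. -/
def Traverses (a b c : Pt) (r : ℝ) : Prop :=
  ∃ x ∈ segment ℝ a b, ∃ y ∈ segment ℝ a b, x ≠ y ∧ dist x c = r ∧ dist y c = r

namespace S8aux

lemma inner_two (x y : Pt) : (inner ℝ x y : ℝ) = x 0 * y 0 + x 1 * y 1 := by
  simp [PiLp.inner_apply, Fin.sum_univ_two, RCLike.inner_apply]; ring

lemma norm_sq_two (x : Pt) : ‖x‖ ^ 2 = x 0 ^ 2 + x 1 ^ 2 := by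
  rw [← real_inner_self_eq_norm_sq, inner_two]; ring

def Dt (w v : Pt) : ℝ := w 0 * v 1 - w 1 * v 0

lemma lagrange (u v : Pt) : Dt u v ^ 2 + (inner ℝ u v : ℝ) ^ 2 = ‖u‖ ^ 2 * ‖v‖ ^ 2 := by
  rw [norm_sq_two, norm_sq_two, inner_two]; unfold Dt; ring

lemma Dt_le (w v : Pt) : |Dt w v| ≤ ‖w‖ * ‖v‖ := by
  have h := lagrange w v
  have h2 : Dt w v ^ 2 ≤ (‖w‖ * ‖v‖) ^ 2 := by nlinarith [sq_nonneg (inner ℝ w v : ℝ)]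
  have h3 : |Dt w v| ≤ |‖w‖ * ‖v‖| := by
    rw [← Real.sqrt_sq_eq_abs, ← Real.sqrt_sq_eq_abs]
    exact Real.sqrt_le_sqrt h2
  have : 0 ≤ ‖w‖ * ‖v‖ := by positivity
  rwa [abs_of_nonneg this] at h3

lemma quad (p u c : Pt) (t : ℝ) :
    ‖p + t • u - c‖ ^ 2 =
      ‖u‖ ^ 2 * t ^ 2 + 2 * (inner ℝ (p - c) u : ℝ) * t + ‖p - c‖ ^ 2 := by
  have h : p + t • u - c = (p - c) + t • u := by abel
  rw [h, ← real_inner_self_eq_norm_sq, ← real_inner_self_eq_norm_sq,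
    ← real_inner_self_eq_norm_sq, real_inner_add_add_self, real_inner_smul_right,
    real_inner_smul_left, real_inner_smul_right]
  ring

lemma between {A B C E ta tb tz : ℝ} (hA : 0 < A) (hab : ta ≠ tb)
    (ha : ta ∈ Set.Icc (0:ℝ) 1) (hb : tb ∈ Set.Icc (0:ℝ) 1)
    (hEa : A * ta ^ 2 + B * ta + C = E) (hEb : A * tb ^ 2 + B * tb + C = E)
    (hz : A * tz ^ 2 + B * tz + C < E) : 0 < tz ∧ tz < 1 := by
  have hfac : (ta - tb) * (A * (ta + tb) + B) = 0 := by linear_combination hEa - hEb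
  have hB : A * (ta + tb) + B = 0 := by
    rcases mul_eq_zero.mp hfac with h | h
    · exact absurd (sub_eq_zero.mp h) hab
    · exact h
  have hBv : B = -(A * (ta + tb)) := by linarith
  subst hBv
  have hE : E = C - A * ta * tb := by linear_combination -hEa
  have hk : A * ((tz - ta) * (tz - tb)) < 0 := by nlinarith [hz, hE]
  have hk2 : (tz - ta) * (tz - tb) < 0 := by
    by_contra hcc
    push_neg at hcc
    nlinarith [hk, hA, hcc]
  obtain ⟨ha0, ha1⟩ := ha; obtain ⟨hb0, hb1⟩ := hb
  constructor <;> nlinarith [hk2]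

lemma seg_data {p q c : Pt} {ρ : ℝ} (h : Traverses p q c ρ) :
    ∃ ta ∈ Set.Icc (0:ℝ) 1, ∃ tb ∈ Set.Icc (0:ℝ) 1, ta ≠ tb ∧
      ‖p + ta • (q - p) - c‖ = ρ ∧ ‖p + tb • (q - p) - c‖ = ρ := by
  obtain ⟨x, hx, y, hy, hxy, hxd, hyd⟩ := h
  rw [segment_eq_image'] at hx hy
  obtain ⟨ta, hta, rfl⟩ := hx
  obtain ⟨tb, htb, rfl⟩ := hy
  exact ⟨ta, hta, tb, htb, fun h => hxy (by rw [h]),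
    by rwa [dist_eq_norm] at hxd, by rwa [dist_eq_norm] at hyd⟩

lemma mid_close {p u c : Pt} {ρ tc td : ℝ}
    (h1 : ‖p + tc • u - c‖ = ρ) (h2 : ‖p + td • u - c‖ = ρ) :
    ‖p + ((tc + td) / 2) • u - c‖ ≤ ρ := by
  have key : p + ((tc + td) / 2) • u - c =
      (2⁻¹ : ℝ) • ((p + tc • u - c) + (p + td • u - c)) := by
    ext i
    simp [PiLp.add_apply, PiLp.sub_apply, PiLp.smul_apply]
    ring
  rw [key, norm_smul]
  have := norm_add_le (p + tc • u - c) (p + td • u - c)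
  rw [h1, h2] at this
  rw [Real.norm_eq_abs]
  have hρ : 0 ≤ ρ := h1 ▸ norm_nonneg _
  calc |(2:ℝ)⁻¹| * ‖(p + tc • u - c) + (p + td • u - c)‖
      ≤ (2:ℝ)⁻¹ * (ρ + ρ) := by
        rw [abs_of_nonneg (by norm_num : (0:ℝ) ≤ 2⁻¹)]
        exact mul_le_mul_of_nonneg_left this (by norm_num)
    _ = ρ := by ring

end S8aux

open S8aux in
set_option maxHeartbeats 1000000 in
/-- For every angle `φ ∈ (0, π/2)` and every `ε > 0` there is `0 < δ < ε`
such that any two noncrossing segments that both traverse the circles of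
radii `ε` and `δ` about a common center meet at an acute angle at most `φ`. -/
theorem stmt_8 (φ : ℝ) (hφ0 : 0 < φ) (hφ1 : φ < Real.pi / 2)
    (ε : ℝ) (hε : 0 < ε) :
    ∃ δ : ℝ, 0 < δ ∧ δ < ε ∧
      ∀ c p q r s : Pt, p ≠ q → r ≠ s →
        Disjoint (openSegment ℝ p q) (openSegment ℝ r s) →
        Traverses p q c ε → Traverses p q c δ →
        Traverses r s c ε → Traverses r s c δ →
        |(inner ℝ (q - p) (s - r) : ℝ)| ≥ Real.cos φ * ‖q - p‖ * ‖s - r‖ := by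
  have hπ := Real.pi_pos
  set k := Real.sin φ with hkdef
  have hk0 : 0 < k := Real.sin_pos_of_pos_of_lt_pi hφ0 (by linarith)
  have hk1 : k ≤ 1 := Real.sin_le_one φ
  have hδ0 : 0 < ε * k / (2 * (k + 2)) := by positivity
  set δ := ε * k / (2 * (k + 2)) with hδdef
  have hδε : δ < ε := by
    rw [hδdef, div_lt_iff₀ (by positivity)]
    nlinarith
  have hhalf : δ + 2 * δ / k = ε / 2 := by
    rw [hδdef]; field_simp
  refine ⟨δ, hδ0, hδε, ?_⟩
  intro c p q r s hpq hrs hdisj hT1e hT1d hT2e hT2d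
  by_contra hcon
  push_neg at hcon
  set u := q - p with hudef
  set v := s - r with hvdef
  have hu0 : u ≠ 0 := sub_ne_zero.mpr hpq.symm
  have hv0 : v ≠ 0 := sub_ne_zero.mpr hrs.symm
  have hun : 0 < ‖u‖ := norm_pos_iff.mpr hu0
  have hvn : 0 < ‖v‖ := norm_pos_iff.mpr hv0
  have hcos : 0 < Real.cos φ := Real.cos_pos_of_mem_Ioo ⟨by linarith, hφ1⟩
  -- the determinant is large
  have hin2 : (inner ℝ u v : ℝ) ^ 2 < Real.cos φ ^ 2 * (‖u‖ * ‖v‖) ^ 2 := by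
    have h1 := abs_nonneg (inner ℝ u v : ℝ)
    have h2 := sq_abs (inner ℝ u v : ℝ)
    nlinarith [hcon, mul_pos hun hvn]
  have hD2 : (k * (‖u‖ * ‖v‖)) ^ 2 < Dt u v ^ 2 := by
    nlinarith [lagrange u v, Real.sin_sq_add_cos_sq φ]
  have hD : k * (‖u‖ * ‖v‖) < |Dt u v| := by
    have h1 : k * (‖u‖ * ‖v‖) = Real.sqrt ((k * (‖u‖ * ‖v‖)) ^ 2) :=
      (Real.sqrt_sq (by positivity)).symm
    rw [h1, ← Real.sqrt_sq_eq_abs]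
    exact Real.sqrt_lt_sqrt (by positivity) hD2
  have hDpos : 0 < |Dt u v| := lt_trans (by positivity) hD
  have hDne : Dt u v ≠ 0 := fun h => by simp [h] at hDpos
  -- segment data
  obtain ⟨ta, hta, tb, htb, htab, hea, heb⟩ := seg_data hT1e
  obtain ⟨tc, htc, td, htd, htcd, hdc, hdd⟩ := seg_data hT1d
  obtain ⟨sa, hsa, sb, hsb, hsab, hfa, hfb⟩ := seg_data hT2e
  obtain ⟨sc, hsc, sd, hsd, hscd, hgc, hgd⟩ := seg_data hT2d
  set τ := (tc + td) / 2 with hτdef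
  set σ := (sc + sd) / 2 with hσdef
  have hm1 : ‖p + τ • u - c‖ ≤ δ := mid_close hdc hdd
  have hm2 : ‖r + σ • v - c‖ ≤ δ := mid_close hgc hgd
  set m₁ := p + τ • u with hm1def
  set m₂ := r + σ • v with hm2def
  set w := m₂ - m₁ with hwdef
  have hw : ‖w‖ ≤ 2 * δ := by
    have : w = (m₂ - c) - (m₁ - c) := by rw [hwdef]; abel
    rw [this]
    calc ‖(m₂ - c) - (m₁ - c)‖ ≤ ‖m₂ - c‖ + ‖m₁ - c‖ := norm_sub_le _ _
      _ ≤ 2 * δ := by linarith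
  set α := Dt w v / Dt u v with hαdef
  set β := Dt w u / Dt u v with hβdef
  set tz := τ + α with htzdef
  set sz := σ + β with hszdef
  set z := p + tz • u with hzdef
  -- z is also on the second line
  have hDne' : u 0 * v 1 - u 1 * v 0 ≠ 0 := by simpa [Dt] using hDne
  have hwi : ∀ j, w j = (r j + σ * v j) - (p j + τ * u j) := by
    intro j
    rw [hwdef, hm2def, hm1def]
    simp [PiLp.sub_apply, PiLp.add_apply, PiLp.smul_apply]
  have hz2 : z = r + sz • v := by
    rw [hzdef, htzdef, hszdef, hαdef, hβdef]
    ext i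
    fin_cases i <;>
    · simp only [PiLp.add_apply, PiLp.smul_apply, smul_eq_mul, Dt, hwi, Fin.zero_eta, Fin.mk_one]
      generalize hD : u 0 * v 1 - u 1 * v 0 = D at hDne' ⊢
      field_simp [hDne']
      subst hD
      ring
  -- z is close to c
  have hzc : z - c = (m₁ - c) + α • u := by
    rw [hzdef, htzdef, hm1def, add_smul]; abel
  have hαu : |α| * ‖u‖ ≤ 2 * δ / k := by
    have h1 : |α| * |Dt u v| = |Dt w v| := by
      rw [hαdef, abs_div, div_mul_cancel₀ _ (abs_ne_zero.mpr hDne)]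
    have h2 : |Dt w v| ≤ ‖w‖ * ‖v‖ := Dt_le w v
    have h3 : ‖w‖ * ‖v‖ ≤ 2 * δ * ‖v‖ :=
      mul_le_mul_of_nonneg_right hw (norm_nonneg v)
    have key : |α| * (k * ‖u‖) * ‖v‖ ≤ (2 * δ) * ‖v‖ := by
      calc |α| * (k * ‖u‖) * ‖v‖ = |α| * (k * (‖u‖ * ‖v‖)) := by ring
        _ ≤ |α| * |Dt u v| := mul_le_mul_of_nonneg_left (le_of_lt hD) (abs_nonneg α)
        _ = |Dt w v| := h1
        _ ≤ ‖w‖ * ‖v‖ := h2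
        _ ≤ 2 * δ * ‖v‖ := h3
    have key2 : |α| * (k * ‖u‖) ≤ 2 * δ := le_of_mul_le_mul_right key hvn
    rw [le_div_iff₀ hk0]
    exact le_of_eq_of_le (by ring : |α| * ‖u‖ * k = |α| * (k * ‖u‖)) key2
  have hnear : ‖z - c‖ < ε := by
    calc ‖z - c‖ = ‖(m₁ - c) + α • u‖ := by rw [hzc]
      _ ≤ ‖m₁ - c‖ + ‖α • u‖ := norm_add_le _ _
      _ = ‖m₁ - c‖ + |α| * ‖u‖ := by rw [norm_smul, Real.norm_eq_abs]
      _ ≤ δ + 2 * δ / k := by linarith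
      _ = ε / 2 := hhalf
      _ < ε := by linarith
  -- z is in the open segment pq
  have hq1 : ∀ t : ℝ, ‖p + t • u - c‖ ^ 2 =
      ‖u‖ ^ 2 * t ^ 2 + (2 * (inner ℝ (p - c) u : ℝ)) * t + ‖p - c‖ ^ 2 := by
    intro t; rw [quad]
  have hA1 : 0 < ‖u‖ ^ 2 := by positivity
  have hz1lt : ‖p + tz • u - c‖ ^ 2 < ε ^ 2 := by
    rw [← hzdef]
    exact pow_lt_pow_left₀ hnear (norm_nonneg _) (by norm_num)
  have ht01 : 0 < tz ∧ tz < 1 := by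
    refine between (B := 2 * (inner ℝ (p - c) u : ℝ)) (C := ‖p - c‖ ^ 2) (E := ε ^ 2) hA1 htab hta htb ?_ ?_ ?_
    · rw [← hq1 ta, hea]
    · rw [← hq1 tb, heb]
    · rw [← hq1 tz]; exact hz1lt
  -- z is in the open segment rs
  have hq2 : ∀ t : ℝ, ‖r + t • v - c‖ ^ 2 =
      ‖v‖ ^ 2 * t ^ 2 + (2 * (inner ℝ (r - c) v : ℝ)) * t + ‖r - c‖ ^ 2 := by
    intro t; rw [quad]
  have hA2 : 0 < ‖v‖ ^ 2 := by positivity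
  have hz2lt : ‖r + sz • v - c‖ ^ 2 < ε ^ 2 := by
    rw [← hz2]
    exact pow_lt_pow_left₀ hnear (norm_nonneg _) (by norm_num)
  have hs01 : 0 < sz ∧ sz < 1 := by
    refine between (B := 2 * (inner ℝ (r - c) v : ℝ)) (C := ‖r - c‖ ^ 2) (E := ε ^ 2) hA2 hsab hsa hsb ?_ ?_ ?_
    · rw [← hq2 sa, hfa]
    · rw [← hq2 sb, hfb]
    · rw [← hq2 sz]; exact hz2lt
  -- contradiction with disjointness
  have hmem1 : z ∈ openSegment ℝ p q := by
    rw [openSegment_eq_image']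
    exact ⟨tz, ⟨ht01.1, ht01.2⟩, rfl⟩
  have hmem2 : z ∈ openSegment ℝ r s := by
    rw [openSegment_eq_image']
    exact ⟨sz, ⟨hs01.1, hs01.2⟩, hz2.symm⟩
  exact Set.disjoint_left.mp hdisj hmem1 hmem2
end
end

section
/- For all disjoint nonempty finite sets R, B ⊆ ℝ² with |R| + |B| = n, there exist a noncrossing covering tree for R and a noncrossing covering tree for B such that the unions of the edge segments of the two trees are disjoint and the total number of edges of the two trees is at most n. -/
noncomputable section

open scoped RealInnerProductSpace

/-- A noncrossing covering tree for `S` with vertex set `V`, edge structure `G`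
and `m` edges: `G` is a tree on `V`; every point of `S` is a vertex or lies on
the segment of some edge; segments of distinct edges meet exactly in their
common endpoints; and no vertex lies in the relative interior of any edge. -/
def IsNCCoverTree (S : Set Pt) (V : Finset Pt)
    (G : SimpleGraph {x : Pt // x ∈ V}) (m : ℕ) : Prop :=
  G.Connected ∧ G.IsAcyclic ∧ G.edgeSet.ncard = m ∧
  (∀ p ∈ S, p ∈ V ∨ ∃ u w : {x : Pt // x ∈ V}, G.Adj u w ∧ p ∈ segment ℝ u.1 w.1) ∧
  (∀ u w u' w' : {x : Pt // x ∈ V}, G.Adj u w → G.Adj u' w' →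
    s(u, w) ≠ s(u', w') →
    segment ℝ u.1 w.1 ∩ segment ℝ u'.1 w'.1 =
      (({u.1, w.1} : Set Pt) ∩ ({u'.1, w'.1} : Set Pt))) ∧
  (∀ x u w : {x : Pt // x ∈ V}, G.Adj u w → x.1 ∉ openSegment ℝ u.1 w.1)

/-- The union of the edge segments of a covering tree. -/
def treeSegUnion (V : Finset Pt) (G : SimpleGraph {x : Pt // x ∈ V}) : Set Pt :=
  ⋃ (u : {x : Pt // x ∈ V}) (w : {x : Pt // x ∈ V}) (_ : G.Adj u w),
    segment ℝ u.1 w.1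

local instance ptDecEq : DecidableEq Pt := Classical.decEq _

/-- auxiliary: make a point of the plane from coordinates. -/
def mkPt (x y : ℝ) : Pt := !₂[x, y]

/-- auxiliary arithmetic fact. -/
lemma claim1 {A g Y H a b y z : ℝ} (ha1 : 1 ≤ a) (hbA : b ≤ A) (hab : a + g ≤ b)
    (hy : |y| ≤ Y) (hz : |z| ≤ Y) (hg : 0 < g) (hYH : Y < H)
    (hmain : (1 - g / A) * (H + Y) < H - Y) : a * (z + H) < b * (y + H) := by
  have hY0 : 0 ≤ Y := le_trans (abs_nonneg y) hy
  have hA : 0 < A := by nlinarith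
  have hb1 : 1 ≤ b := by linarith
  have hy' := abs_le.1 hy
  have hz' := abs_le.1 hz
  have hgb : g / A * b ≤ g := by
    rw [div_mul_eq_mul_div, div_le_iff₀ hA]; nlinarith
  have hσb : a ≤ (1 - g / A) * b := by
    rw [sub_mul, one_mul]; linarith
  have hHY : 0 < H + Y := by linarith
  calc a * (z + H) ≤ a * (Y + H) := by nlinarith
    _ ≤ (1 - g / A) * b * (Y + H) := by nlinarith
    _ = b * ((1 - g / A) * (H + Y)) := by ring
    _ < b * (H - Y) := by nlinarith
    _ ≤ b * (y + H) := by nlinarith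

/-- auxiliary arithmetic fact. -/
lemma claim2 {A g Y H a b y z s t : ℝ} (ha1 : 1 ≤ a) (hbA : b ≤ A) (hab : a + g ≤ b)
    (hy : |y| ≤ Y) (hz : |z| ≤ Y) (hg : 0 < g) (hYH : Y < H)
    (hmain : (1 - g / A) * (H + Y) < H - Y)
    (hs0 : 0 ≤ s) (hs1 : s ≤ 1) (ht0 : 0 ≤ t) (ht1 : t ≤ 1)
    (e1 : s * a = t * b) (e2 : s * (y + H) + t * (H - z) = 2 * H) : False := by
  have hY0 : 0 ≤ Y := le_trans (abs_nonneg y) hy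
  have hA : 0 < A := by nlinarith
  have hb1 : 1 ≤ b := by linarith
  have hy' := abs_le.1 hy
  have hz' := abs_le.1 hz
  have hgb : g / A * b ≤ g := by
    rw [div_mul_eq_mul_div, div_le_iff₀ hA]; nlinarith
  have hσb : a ≤ (1 - g / A) * b := by
    rw [sub_mul, one_mul]; linarith
  have h1 : s * (y + H) ≤ H + Y := by nlinarith
  have h2 : H - Y ≤ t * (H - z) := by linarith
  have h3 : H - Y ≤ t * (H + Y) := by nlinarith
  have h4 : t * b ≤ (1 - g / A) * b := by nlinarith
  have h5 : t ≤ 1 - g / A := le_of_mul_le_mul_right (by linarith) (by linarith : (0:ℝ) < b)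
  nlinarith

/-- auxiliary: a star from an apex `c` to all points of `S` is a noncrossing
covering tree for `S`, provided no two points of `S` are collinear with `c`. -/
lemma star_tree (S : Finset Pt) (hS : S.Nonempty) (c : Pt) (hc : c ∉ S)
    (hind : ∀ p ∈ S, ∀ q ∈ S, p ≠ q → ∀ s s' : ℝ, s • (p - c) = s' • (q - c) → s = 0 ∧ s' = 0)
    (hne : ∀ p ∈ S, p ≠ c) :
    ∃ G : SimpleGraph {x : Pt // x ∈ insert c S},
      IsNCCoverTree (S : Set Pt) (insert c S) G G.edgeSet.ncard ∧
      G.edgeSet.ncard ≤ S.card ∧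
      treeSegUnion (insert c S) G ⊆ ⋃ p ∈ S, segment ℝ c p := by
  classical
  set V : Finset Pt := insert c S with hV
  have hcV : c ∈ V := Finset.mem_insert_self _ _
  set c0 : {x : Pt // x ∈ V} := ⟨c, hcV⟩ with hc0
  have hval : ∀ x : {x : Pt // x ∈ V}, x ≠ c0 → x.1 ∈ S := by
    intro x hx
    rcases Finset.mem_insert.1 x.2 with h | h
    · exact absurd (Subtype.ext h) hx
    · exact h
  set G : SimpleGraph {x : Pt // x ∈ V} :=
    { Adj := fun u w => u ≠ w ∧ (u = c0 ∨ w = c0)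
      symm := ⟨by rintro u w ⟨h1, h2⟩; exact ⟨h1.symm, h2.symm⟩⟩
      loopless := ⟨fun u h => h.1 rfl⟩ } with hG
  have hAdjdef : ∀ u w : {x : Pt // x ∈ V}, G.Adj u w ↔ (u ≠ w ∧ (u = c0 ∨ w = c0)) := by
    intro u w; rfl
  -- segment parametrization helper
  have hsub : ∀ p z : Pt, z ∈ segment ℝ c p → ∃ s : ℝ, 0 ≤ s ∧ s ≤ 1 ∧ z - c = s • (p - c) := by
    intro p z hz
    rw [segment_eq_image'] at hz
    obtain ⟨s, hs, rfl⟩ := hz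
    exact ⟨s, hs.1, hs.2, by rw [add_sub_cancel_left]⟩
  have hseg : ∀ p ∈ S, ∀ q ∈ S, p ≠ q →
      segment ℝ c p ∩ segment ℝ c q = {c} := by
    intro p hp q hq hpq
    apply Set.eq_singleton_iff_unique_mem.2
    refine ⟨⟨left_mem_segment ℝ c p, left_mem_segment ℝ c q⟩, ?_⟩
    rintro z ⟨hz1, hz2⟩
    obtain ⟨s, _, _, hs⟩ := hsub p z hz1
    obtain ⟨t, _, _, ht⟩ := hsub q z hz2
    have h := hind p hp q hq hpq s t (by rw [← hs, ← ht])
    have hz : z - c = 0 := by rw [hs, h.1, zero_smul]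
    have := sub_eq_zero.1 hz
    simpa using this
  have hopen : ∀ x p, p ∈ S → (x = c ∨ x ∈ S) → x ∉ openSegment ℝ c p := by
    intro x p hp hx hmem
    rw [openSegment_eq_image'] at hmem
    obtain ⟨s, hs, hxe⟩ := hmem
    have hxc : x - c = s • (p - c) := by rw [← hxe, add_sub_cancel_left]
    rcases hx with h | hxS
    · rw [h, sub_self] at hxc
      have hpc : p - c ≠ 0 := sub_ne_zero.2 (hne p hp)
      have h0 : s • (p - c) = 0 := hxc.symm
      rcases smul_eq_zero.1 h0 with h | h
      · exact absurd h (ne_of_gt hs.1)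
      · exact hpc h
    · by_cases hxp : x = p
      · subst hxp
        have h0 : (1 - s) • (x - c) = 0 := by
          rw [sub_smul, one_smul, ← hxc, sub_self]
        rcases smul_eq_zero.1 h0 with h | h
        · have : s = 1 := by linarith [sub_eq_zero.1 h]
          linarith [hs.2]
        · exact (hne x hxS) (sub_eq_zero.1 h)
      · have h := hind x hxS p hp hxp 1 s (by rw [one_smul, hxc])
        exact one_ne_zero h.1
  -- adjacency normalization
  have hadj : ∀ u w : {x : Pt // x ∈ V}, G.Adj u w →
      ∃ x : {x : Pt // x ∈ V}, x.1 ∈ S ∧ s(u, w) = s(c0, x) ∧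
        segment ℝ u.1 w.1 = segment ℝ c x.1 ∧
        openSegment ℝ u.1 w.1 = openSegment ℝ c x.1 ∧
        ({u.1, w.1} : Set Pt) = {c, x.1} := by
    intro u w h
    rcases h.2 with h' | h'
    · subst h'
      exact ⟨w, hval w (Ne.symm h.1), rfl, rfl, rfl, rfl⟩
    · subst h'
      refine ⟨u, hval u h.1, Sym2.eq_swap, segment_symm ℝ _ _, openSegment_symm ℝ _ _, ?_⟩
      exact Set.pair_comm _ _
  -- connectivity
  have hconn : G.Connected := by
    rw [SimpleGraph.connected_iff]
    refine ⟨?_, ⟨c0⟩⟩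
    intro u v
    by_cases huv : u = v
    · exact huv ▸ SimpleGraph.Reachable.refl u
    rcases eq_or_ne u c0 with rfl | hu
    · exact SimpleGraph.Adj.reachable ((hAdjdef _ _).2 ⟨huv, Or.inl rfl⟩)
    rcases eq_or_ne v c0 with rfl | hv
    · exact SimpleGraph.Adj.reachable ((hAdjdef _ _).2 ⟨huv, Or.inr rfl⟩)
    · exact (SimpleGraph.Adj.reachable ((hAdjdef _ _).2 ⟨hu, Or.inr rfl⟩)).trans
        (SimpleGraph.Adj.reachable ((hAdjdef _ _).2 ⟨Ne.symm hv, Or.inl rfl⟩))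
  -- acyclicity
  have hacyc : G.IsAcyclic := by
    intro v p hp
    have h3 := hp.three_le_length
    cases p with
    | nil => simp at h3
    | cons h₁ q =>
      rename_i u
      cases q with
      | nil => simp at h3
      | cons h₂ r =>
        rename_i w
        have hnodup := hp.support_nodup
        simp only [SimpleGraph.Walk.support_cons, List.tail_cons] at hnodup
        rw [List.nodup_cons] at hnodup
        by_cases huc : u = c0
        · have hw : w ≠ c0 := fun h => h₂.1 (huc.trans h.symm)
          cases r with
          | nil => simp at h3
          | cons h₃ r' =>
            rename_i x
            have hx : x = c0 := h₃.2.resolve_left hw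
            refine hnodup.1 ?_
            rw [SimpleGraph.Walk.support_cons]
            refine List.mem_cons_of_mem _ ?_
            rw [huc, ← hx]
            exact SimpleGraph.Walk.start_mem_support r'
        · have hv : v = c0 := h₁.2.resolve_right huc
          have hw : w = c0 := h₂.2.resolve_left huc
          cases r with
          | nil => simp at h3
          | cons h₃ r' =>
            rename_i x
            have hv' : v ∈ r'.support := SimpleGraph.Walk.end_mem_support r'
            have hw' : w ∈ r'.support := by rw [hw, ← hv]; exact hv'
            have h2 := hnodup.2
            rw [SimpleGraph.Walk.support_cons, List.nodup_cons] at h2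
            exact h2.1 hw'
  -- edge count
  have hcount : G.edgeSet.ncard ≤ S.card := by
    have hsub' : G.edgeSet ⊆ (fun x : {x : Pt // x ∈ V} => s(c0, x)) '' {x | x ≠ c0} := by
      intro e he
      induction e using Sym2.ind with
      | _ u w =>
        rw [SimpleGraph.mem_edgeSet] at he
        rcases he.2 with h | h
        · exact ⟨w, fun hw => he.1 (h.trans hw.symm), by rw [h]⟩
        · exact ⟨u, fun hu => he.1 (hu.trans h.symm), by rw [h, Sym2.eq_swap]⟩
    calc G.edgeSet.ncard
        ≤ ((fun x : {x : Pt // x ∈ V} => s(c0, x)) '' {x | x ≠ c0}).ncard :=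
          Set.ncard_le_ncard hsub' (Set.toFinite _)
      _ ≤ ({x : {x : Pt // x ∈ V} | x ≠ c0}).ncard := Set.ncard_image_le (Set.toFinite _)
      _ = ((Set.univ : Set {x : Pt // x ∈ V}) \ {c0}).ncard := by
          congr 1; ext x; simp
      _ = (Set.univ : Set {x : Pt // x ∈ V}).ncard - 1 :=
          Set.ncard_diff_singleton_of_mem (Set.mem_univ _)
      _ = Fintype.card {x : Pt // x ∈ V} - 1 := by
          rw [Set.ncard_univ, Nat.card_eq_fintype_card]
      _ = V.card - 1 := by rw [Fintype.card_coe]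
      _ = S.card := by rw [hV, Finset.card_insert_of_notMem hc]; omega
  refine ⟨G, ⟨hconn, hacyc, rfl, ?_, ?_, ?_⟩, hcount, ?_⟩
  · -- coverage
    intro p hp
    exact Or.inl (Finset.mem_insert_of_mem hp)
  · -- noncrossing
    intro u w u' w' h h' hne_e
    obtain ⟨x, hxS, hsym, hsegeq, _, hpair⟩ := hadj u w h
    obtain ⟨x', hx'S, hsym', hsegeq', _, hpair'⟩ := hadj u' w' h'
    have hxx' : x ≠ x' := fun hh => hne_e (by rw [hsym, hsym', hh])
    have hvalne : x.1 ≠ x'.1 := fun hh => hxx' (Subtype.ext hh)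
    rw [hsegeq, hsegeq', hpair, hpair', hseg x.1 hxS x'.1 hx'S hvalne]
    have hxc : x.1 ≠ c := hne _ hxS
    have hx'c : x'.1 ≠ c := hne _ hx'S
    ext z
    simp only [Set.mem_inter_iff, Set.mem_insert_iff, Set.mem_singleton_iff]
    constructor
    · rintro rfl; exact ⟨Or.inl rfl, Or.inl rfl⟩
    · rintro ⟨h1 | h1, h2 | h2⟩ <;> subst h1 <;>
        first | rfl | exact h2 | exact absurd h2 hvalne
  · -- no vertex in relative interior
    intro x u w h
    obtain ⟨y, hyS, _, _, hopeneq, _⟩ := hadj u w h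
    rw [hopeneq]
    apply hopen x.1 y.1 hyS
    rcases Finset.mem_insert.1 x.2 with hh | hh
    · exact Or.inl hh
    · exact Or.inr hh
  · -- union bound
    intro z hz
    simp only [treeSegUnion, Set.mem_iUnion] at hz
    obtain ⟨u, w, h, hzm⟩ := hz
    obtain ⟨x, hxS, _, hsegeq, _, _⟩ := hadj u w h
    exact Set.mem_biUnion hxS (hsegeq ▸ hzm)

/-- Every bicolored set of `n` points admits two mutually noncrossing
monochromatic covering trees with at most `n` edges in total. -/
theorem stmt_14 (n : ℕ) (R B : Finset Pt) (hdisj : Disjoint R B)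
    (hR : R.Nonempty) (hB : B.Nonempty) (hcard : R.card + B.card = n) :
    ∃ (VR : Finset Pt) (GR : SimpleGraph {x : Pt // x ∈ VR}) (mR : ℕ)
      (VB : Finset Pt) (GB : SimpleGraph {x : Pt // x ∈ VB}) (mB : ℕ),
      IsNCCoverTree (R : Set Pt) VR GR mR ∧
      IsNCCoverTree (B : Set Pt) VB GB mB ∧
      Disjoint (treeSegUnion VR GR) (treeSegUnion VB GB) ∧
      mR + mB ≤ n := by
  classical
  set P : Finset Pt := R ∪ B with hP
  obtain ⟨ρ0, hρ0⟩ := hR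
  obtain ⟨β0, hβ0⟩ := hB
  have hρ0P : ρ0 ∈ P := Finset.mem_union_left _ hρ0
  have hβ0P : β0 ∈ P := Finset.mem_union_right _ hβ0
  have hρβ : ρ0 ≠ β0 := fun h => (Finset.disjoint_left.1 hdisj) hρ0 (h ▸ hβ0)
  -- choose a generic slope τ
  obtain ⟨τ, hτ⟩ := Infinite.exists_notMem_finset
    (((P ×ˢ P).filter fun pq => pq.1 1 ≠ pq.2 1).image
      fun pq => (pq.2 0 - pq.1 0) / (pq.1 1 - pq.2 1))
  set f : Pt → ℝ := fun p => p 0 + τ * p 1 with hf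
  have hinj : ∀ p ∈ P, ∀ q ∈ P, p ≠ q → f p ≠ f q := by
    intro p hp q hq hpq heq
    by_cases h1 : p 1 = q 1
    · have h0 : p 0 = q 0 := by
        simp only [hf] at heq; rw [h1] at heq; linarith
      exact hpq (by ext i; fin_cases i <;> assumption)
    · apply hτ
      refine Finset.mem_image.2 ⟨(p, q),
        Finset.mem_filter.2 ⟨Finset.mem_product.2 ⟨hp, hq⟩, h1⟩, ?_⟩
      simp only [hf] at heq
      rw [div_eq_iff (sub_ne_zero.2 h1)]
      linarith
  -- constants
  have hPne : P.Nonempty := ⟨ρ0, hρ0P⟩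
  set fmin := (P.image f).min' (hPne.image f) with hfmin
  set fmax := (P.image f).max' (hPne.image f) with hfmax
  set C := 1 - fmin with hC
  set A := fmax - fmin + 1 with hA
  have ha_lb : ∀ p ∈ P, 1 ≤ f p + C := by
    intro p hp
    have := Finset.min'_le (P.image f) (f p) (Finset.mem_image_of_mem f hp)
    rw [hC]; linarith
  have ha_ub : ∀ p ∈ P, f p + C ≤ A := by
    intro p hp
    have := Finset.le_max' (P.image f) (f p) (Finset.mem_image_of_mem f hp)
    rw [hA, hC]; linarith
  set Y := (P.image fun p => |p 1|).max' (hPne.image _) with hYdef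
  have hY : ∀ p ∈ P, |p 1| ≤ Y := fun p hp =>
    Finset.le_max' (P.image fun q => |q 1|) _ (Finset.mem_image_of_mem _ hp)
  have hY0 : 0 ≤ Y := le_trans (abs_nonneg _) (hY ρ0 hρ0P)
  -- minimum gap
  set D := (P ×ˢ P).filter (fun pq => pq.1 ≠ pq.2) with hD
  have hDne : D.Nonempty :=
    ⟨(ρ0, β0), Finset.mem_filter.2 ⟨Finset.mem_product.2 ⟨hρ0P, hβ0P⟩, hρβ⟩⟩
  set g := (D.image fun pq => |f pq.1 - f pq.2|).min' (hDne.image _) with hg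
  have hgle : ∀ p ∈ P, ∀ q ∈ P, p ≠ q → g ≤ |f p - f q| := by
    intro p hp q hq hpq
    exact Finset.min'_le _ _ (Finset.mem_image.2
      ⟨(p, q), Finset.mem_filter.2 ⟨Finset.mem_product.2 ⟨hp, hq⟩, hpq⟩, rfl⟩)
  have hg0 : 0 < g := by
    obtain ⟨x, hx, hxe⟩ := Finset.mem_image.1 (Finset.min'_mem _ (hDne.image
      (fun pq => |f pq.1 - f pq.2|)))
    rw [hg, ← hxe]
    rcases Finset.mem_filter.1 hx with ⟨hxP, hxne⟩
    rcases Finset.mem_product.1 hxP with ⟨h1, h2⟩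
    exact abs_pos.2 (sub_ne_zero.2 (hinj _ h1 _ h2 hxne))
  have hgA : g ≤ A - 1 := by
    refine le_trans (hgle ρ0 hρ0P β0 hβ0P hρβ) ?_
    have h1 := Finset.min'_le (P.image f) (f ρ0) (Finset.mem_image_of_mem f hρ0P)
    have h2 := Finset.le_max' (P.image f) (f ρ0) (Finset.mem_image_of_mem f hρ0P)
    have h3 := Finset.min'_le (P.image f) (f β0) (Finset.mem_image_of_mem f hβ0P)
    have h4 := Finset.le_max' (P.image f) (f β0) (Finset.mem_image_of_mem f hβ0P)
    rw [hA, abs_le]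
    constructor <;> linarith
  set σ := 1 - g / A with hσdef
  have hA1 : 1 ≤ A := by linarith
  have hA0 : 0 < A := by linarith
  have hσ0 : 0 ≤ σ := by
    rw [hσdef]
    have : g / A ≤ 1 := (div_le_one hA0).2 (by linarith)
    linarith
  have hσ1 : σ < 1 := by
    rw [hσdef]
    have : 0 < g / A := div_pos hg0 hA0
    linarith
  set H := (Y + 1) * (1 + σ) / (1 - σ) with hHdef
  have hHs : H * (1 - σ) = (Y + 1) * (1 + σ) := by
    rw [hHdef, div_mul_cancel₀]
    linarith
  have hH1 : Y < H := by nlinarith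
  have hmain' : σ * (H + Y) < H - Y := by nlinarith
  have hmain : (1 - g / A) * (H + Y) < H - Y := by rw [← hσdef]; exact hmain'
  -- gap in shifted values
  have hgap : ∀ a b : Pt, a ∈ P → b ∈ P → f a < f b → f a + C + g ≤ f b + C := by
    intro a b ha hb hab
    have h := hgle a ha b hb (fun h => by rw [h] at hab; exact lt_irrefl _ hab)
    rw [abs_of_neg (by linarith : f a - f b < 0)] at h
    linarith
  -- the two apexes
  set cR : Pt := mkPt (τ * H - C) (-H) with hcRdef
  set cB : Pt := mkPt (-(τ * H) - C) H with hcBdef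
  have hcR0 : cR 0 = τ * H - C := rfl
  have hcR1 : cR 1 = -H := rfl
  have hcB0 : cB 0 = -(τ * H) - C := rfl
  have hcB1 : cB 1 = H := rfl
  have hfcR : f cR + C = 0 := by simp only [hf, hcR0, hcR1]; ring
  have hfcB : f cB + C = 0 := by simp only [hf, hcB0, hcB1]; ring
  have hcRnotin : cR ∉ R := by
    intro h
    have := ha_lb cR (Finset.mem_union_left _ h)
    linarith [hfcR]
  have hcBnotin : cB ∉ B := by
    intro h
    have := ha_lb cB (Finset.mem_union_right _ h)
    linarith [hfcB]
  -- intra-color independence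
  have hintra : ∀ cc : Pt, f cc + C = 0 → (cc 1 = -H ∨ cc 1 = H) →
      ∀ p ∈ P, ∀ q ∈ P, p ≠ q → ∀ s s' : ℝ,
        s • (p - cc) = s' • (q - cc) → s = 0 ∧ s' = 0 := by
    intro cc hfc hcc1 p hp q hq hpq s s' hss
    have h0 : s * (p 0 - cc 0) = s' * (q 0 - cc 0) := by
      have h := congrArg (fun v : Pt => v 0) hss
      simpa [smul_eq_mul] using h
    have h1 : s * (p 1 - cc 1) = s' * (q 1 - cc 1) := by
      have h := congrArg (fun v : Pt => v 1) hss
      simpa [smul_eq_mul] using h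
    have e1 : s * (f p + C) = s' * (f q + C) := by
      simp only [hf] at hfc ⊢
      linear_combination h0 + τ * h1 + (s - s') * hfc
    have hap1 : 1 ≤ f p + C := ha_lb p hp
    have haq1 : 1 ≤ f q + C := ha_lb q hq
    by_cases hs : s = 0
    · subst hs
      refine ⟨rfl, ?_⟩
      rw [zero_mul] at e1
      rcases mul_eq_zero.1 e1.symm with h | h
      · exact h
      · linarith
    · exfalso
      by_cases hs' : s' = 0
      · rw [hs', zero_mul] at e1
        rcases mul_eq_zero.1 e1 with h | h
        · exact hs h
        · linarith
      have hkey0 : s * s' * ((f p + C) * (q 1 - cc 1) - (f q + C) * (p 1 - cc 1)) = 0 := by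
        linear_combination (s' * (q 1 - cc 1)) * e1 - (s' * (f q + C)) * h1
      have hkey : (f p + C) * (q 1 - cc 1) = (f q + C) * (p 1 - cc 1) := by
        have hss0 : s * s' ≠ 0 := mul_ne_zero hs hs'
        have h := (mul_eq_zero.1 hkey0).resolve_left hss0
        linarith
      have hfpq : f p ≠ f q := hinj p hp q hq hpq
      rcases hcc1 with hd | hd <;> rw [hd] at hkey <;>
        rcases lt_or_gt_of_ne hfpq with hlt | hlt
      · have hkey2 : (f p + C) * (q 1 + H) = (f q + C) * (p 1 + H) := by
          linear_combination hkey
        exact absurd hkey2 (ne_of_lt (claim1 (ha_lb p hp) (ha_ub q hq)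
          (hgap p q hp hq hlt) (hY p hp) (hY q hq) hg0 hH1 hmain))
      · have hkey2 : (f q + C) * (p 1 + H) = (f p + C) * (q 1 + H) := by
          linear_combination -hkey
        exact absurd hkey2 (ne_of_lt (claim1 (ha_lb q hq) (ha_ub p hp)
          (hgap q p hq hp hlt) (hY q hq) (hY p hp) hg0 hH1 hmain))
      · have hkey2 : (f p + C) * (-(q 1) + H) = (f q + C) * (-(p 1) + H) := by
          linear_combination -hkey
        refine absurd hkey2 (ne_of_lt (claim1 (ha_lb p hp) (ha_ub q hq)
          (hgap p q hp hq hlt) ?_ ?_ hg0 hH1 hmain))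
        · rw [abs_neg]; exact hY p hp
        · rw [abs_neg]; exact hY q hq
      · have hkey2 : (f q + C) * (-(p 1) + H) = (f p + C) * (-(q 1) + H) := by
          linear_combination hkey
        refine absurd hkey2 (ne_of_lt (claim1 (ha_lb q hq) (ha_ub p hp)
          (hgap q p hq hp hlt) ?_ ?_ hg0 hH1 hmain))
        · rw [abs_neg]; exact hY q hq
        · rw [abs_neg]; exact hY p hp
  have hindR : ∀ p ∈ R, ∀ q ∈ R, p ≠ q → ∀ s s' : ℝ,
      s • (p - cR) = s' • (q - cR) → s = 0 ∧ s' = 0 := by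
    intro p hp q hq
    exact hintra cR hfcR (Or.inl hcR1) p (Finset.mem_union_left _ hp)
      q (Finset.mem_union_left _ hq)
  have hindB : ∀ p ∈ B, ∀ q ∈ B, p ≠ q → ∀ s s' : ℝ,
      s • (p - cB) = s' • (q - cB) → s = 0 ∧ s' = 0 := by
    intro p hp q hq
    exact hintra cB hfcB (Or.inr hcB1) p (Finset.mem_union_right _ hp)
      q (Finset.mem_union_right _ hq)
  -- inter-color disjointness of segments
  have hsegdisj : ∀ p ∈ R, ∀ q ∈ B, ∀ z : Pt,
      z ∈ segment ℝ cR p → z ∈ segment ℝ cB q → False := by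
    intro p hp q hq z hz1 hz2
    rw [segment_eq_image'] at hz1 hz2
    obtain ⟨s, hs, hz1'⟩ := hz1
    obtain ⟨t, ht, hz2'⟩ := hz2
    have hz : cR + s • (p - cR) = cB + t • (q - cB) := by
      have h := hz1'.trans hz2'.symm
      simpa using h
    have h0 : cR 0 + s * (p 0 - cR 0) = cB 0 + t * (q 0 - cB 0) := by
      have h := congrArg (fun v : Pt => v 0) hz
      simpa [smul_eq_mul] using h
    have h1 : cR 1 + s * (p 1 - cR 1) = cB 1 + t * (q 1 - cB 1) := by
      have h := congrArg (fun v : Pt => v 1) hz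
      simpa [smul_eq_mul] using h
    simp only [hcR0, hcR1, hcB0, hcB1] at h0 h1
    have hpP : p ∈ P := Finset.mem_union_left _ hp
    have hqP : q ∈ P := Finset.mem_union_right _ hq
    have e1 : s * (f p + C) = t * (f q + C) := by
      simp only [hf]
      linear_combination h0 + τ * h1
    have e2 : s * (p 1 + H) + t * (H - q 1) = 2 * H := by linear_combination h1
    have hpq : p ≠ q := fun h => (Finset.disjoint_left.1 hdisj) hp (h ▸ hq)
    have hfpq : f p ≠ f q := hinj p hpP q hqP hpq
    rcases lt_or_gt_of_ne hfpq with hlt | hlt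
    · exact claim2 (ha_lb p hpP) (ha_ub q hqP) (hgap p q hpP hqP hlt)
        (hY p hpP) (hY q hqP) hg0 hH1 hmain hs.1 hs.2 ht.1 ht.2 e1 e2
    · refine claim2 (y := -(q 1)) (z := -(p 1)) (ha_lb q hqP) (ha_ub p hpP)
        (hgap q p hqP hpP hlt) ?_ ?_ hg0 hH1 hmain ht.1 ht.2 hs.1 hs.2 e1.symm ?_
      · rw [abs_neg]; exact hY q hqP
      · rw [abs_neg]; exact hY p hpP
      · linear_combination e2
  -- build the two stars
  have hneR : ∀ p ∈ R, p ≠ cR := fun p hp h => hcRnotin (h ▸ hp)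
  have hneB : ∀ p ∈ B, p ≠ cB := fun p hp h => hcBnotin (h ▸ hp)
  obtain ⟨GR, hGR, hGRcard, hGRsub⟩ := star_tree R ⟨ρ0, hρ0⟩ cR hcRnotin hindR hneR
  obtain ⟨GB, hGB, hGBcard, hGBsub⟩ := star_tree B ⟨β0, hβ0⟩ cB hcBnotin hindB hneB
  refine ⟨insert cR R, GR, _, insert cB B, GB, _, hGR, hGB, ?_, ?_⟩
  · rw [Set.disjoint_left]
    intro z hz1 hz2
    have h1 := hGRsub hz1
    have h2 := hGBsub hz2
    simp only [Set.mem_iUnion] at h1 h2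
    obtain ⟨p, hp, hzp⟩ := h1
    obtain ⟨q, hq, hzq⟩ := h2
    exact hsegdisj p hp q hq z hzp hzq
  · calc GR.edgeSet.ncard + GB.edgeSet.ncard ≤ R.card + B.card :=
        Nat.add_le_add hGRcard hGBcard
      _ = n := hcard
end
end

section
/- Let S be a set of 7 points in ℝ² with pairwise distinct x-coordinates, and let x_min and x_max be the minimum and maximum x-coordinates of points of S. Then there exist a point v ∈ ℝ² and at most 5 nondegenerate closed segments, each having v as one of its endpoints, such that any two of the segments intersect exactly in {v}, the union of the segments contains S, and the union of the segments is contained in the closed vertical strip {(x, y) ∈ ℝ² : x_min ≤ x ≤ x_max}. -/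
noncomputable section

open scoped RealInnerProductSpace

namespace Star16

noncomputable instance : DecidableEq Pt := Classical.decEq _

/-- Orientation determinant of an ordered triple of points. -/
def orient (p q r : Pt) : ℝ :=
  (q 0 - p 0) * (r 1 - p 1) - (r 0 - p 0) * (q 1 - p 1)

lemma orient_cycl (p q r : Pt) : orient p q r = orient q r p := by
  unfold orient; ring

lemma sgn1 {x y z : ℝ} (h1 : x * y < 0) (h2 : y * z < 0) : 0 < x * z := by
  by_contra hc
  push_neg at hc
  nlinarith [mul_pos (neg_pos.mpr h1) (neg_pos.mpr h2), sq_nonneg y]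

lemma sgn2 {x y z : ℝ} (h1 : 0 < x * y) (h2 : y * z < 0) : x * z < 0 := by
  by_contra hc
  push_neg at hc
  nlinarith [mul_pos h1 (neg_pos.mpr h2), sq_nonneg y]

def mk (x y : ℝ) : Pt := (WithLp.equiv 2 (Fin 2 → ℝ)).symm ![x, y]

lemma mk_zero (x y : ℝ) : mk x y 0 = x := rfl
lemma mk_one (x y : ℝ) : mk x y 1 = y := rfl

/-- Normalized direction of `p` as seen from `v`. -/
def dirv (v p : Pt) : Pt := ‖p - v‖⁻¹ • (p - v)

lemma dir_eq (v p q : Pt) (hp : p ≠ v) (μ : ℝ) (hμ : 0 < μ)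
    (h : q - v = μ • (p - v)) : dirv v q = dirv v p := by
  have hw : p - v ≠ 0 := sub_ne_zero.mpr hp
  have hwn : ‖p - v‖ ≠ 0 := norm_ne_zero_iff.mpr hw
  unfold dirv
  rw [h, norm_smul, Real.norm_eq_abs, abs_of_pos hμ, smul_smul]
  congr 1
  field_simp

lemma dir_repr (v p : Pt) (hp : p ≠ v) : p - v = ‖p - v‖ • dirv v p := by
  have hw : p - v ≠ 0 := sub_ne_zero.mpr hp
  unfold dirv
  rw [smul_inv_smul₀ (norm_ne_zero_iff.mpr hw)]

lemma image_card_le_one_collision {s : Finset Pt} {f : Pt → Pt} {b c : Pt}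
    (hb : b ∈ s) (hc : c ∈ s) (hbc : b ≠ c) (hf : f b = f c) :
    (s.image f).card ≤ s.card - 1 := by
  classical
  have hsub : s.image f ⊆ (s.erase b).image f := by
    intro y hy
    obtain ⟨p, hp, rfl⟩ := Finset.mem_image.mp hy
    by_cases hpb : p = b
    · exact Finset.mem_image.mpr ⟨c, Finset.mem_erase.mpr ⟨hbc.symm, hc⟩, by rw [hpb, hf]⟩
    · exact Finset.mem_image.mpr ⟨p, Finset.mem_erase.mpr ⟨hpb, hp⟩, rfl⟩
  calc (s.image f).card ≤ ((s.erase b).image f).card := Finset.card_le_card hsub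
    _ ≤ (s.erase b).card := Finset.card_image_le
    _ = s.card - 1 := Finset.card_erase_of_mem hb

lemma image_card_le_two_collision {s : Finset Pt} {f : Pt → Pt} {a b c d : Pt}
    (ha : a ∈ s) (hb : b ∈ s) (hc : c ∈ s) (hd : d ∈ s)
    (hab : a ≠ b) (hcd : c ≠ d) (hac : a ≠ c) (had : a ≠ d) (hbc : b ≠ c) (hbd : b ≠ d)
    (hf1 : f a = f b) (hf2 : f c = f d) :
    (s.image f).card ≤ s.card - 2 := by
  classical
  have hsub : s.image f ⊆ ((s.erase b).erase d).image f := by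
    intro y hy
    obtain ⟨p, hp, rfl⟩ := Finset.mem_image.mp hy
    by_cases hpb : p = b
    · refine Finset.mem_image.mpr ⟨a, ?_, by rw [hpb, ← hf1]⟩
      exact Finset.mem_erase.mpr ⟨had, Finset.mem_erase.mpr ⟨hab, ha⟩⟩
    · by_cases hpd : p = d
      · refine Finset.mem_image.mpr ⟨c, ?_, by rw [hpd, ← hf2]⟩
        exact Finset.mem_erase.mpr ⟨hcd, Finset.mem_erase.mpr ⟨hbc.symm, hc⟩⟩
      · exact Finset.mem_image.mpr ⟨p, Finset.mem_erase.mpr ⟨hpd, Finset.mem_erase.mpr ⟨hpb, hp⟩⟩, rfl⟩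
  have hdm : d ∈ s.erase b := Finset.mem_erase.mpr ⟨hbd.symm, hd⟩
  calc (s.image f).card ≤ (((s.erase b).erase d).image f).card := Finset.card_le_card hsub
    _ ≤ ((s.erase b).erase d).card := Finset.card_image_le
    _ = (s.erase b).card - 1 := Finset.card_erase_of_mem hdm
    _ = s.card - 1 - 1 := by rw [Finset.card_erase_of_mem hb]
    _ = s.card - 2 := by omega

/-- Main wrap-up: a point `v` in the strip whose direction image has at most 5
elements yields the desired star. -/
lemma wrap (S : Finset Pt) (hcard : S.card = 7) (xmin xmax : ℝ)
    (hS : ∀ p ∈ S, xmin ≤ p 0 ∧ p 0 ≤ xmax)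
    (v : Pt) (hv1 : xmin ≤ v 0) (hv2 : v 0 ≤ xmax)
    (hT : ((S.erase v).image (dirv v)).card ≤ 5) :
    ∃ (v' : Pt) (m : ℕ) (e : Fin m → Pt), m ≤ 5 ∧
      (∀ i, e i ≠ v') ∧
      (∀ i j, i ≠ j → segment ℝ v' (e i) ∩ segment ℝ v' (e j) = {v'}) ∧
      (S : Set Pt) ⊆ (⋃ i, segment ℝ v' (e i)) ∧
      (⋃ i, segment ℝ v' (e i)) ⊆ {q : Pt | xmin ≤ q 0 ∧ q 0 ≤ xmax} := by
  classical
  set s : Finset Pt := S.erase v with hs_def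
  set T : Finset Pt := s.image (dirv v) with hT_def
  have hs_card : 6 ≤ s.card := by
    have h := Finset.pred_card_le_card_erase (a := v) (s := S)
    simp only [hs_def]
    omega
  have hs_ne : s.Nonempty := Finset.card_pos.mp (by omega)
  have hT_ne : T.Nonempty := hs_ne.image _
  have hm1 : 1 ≤ T.card := Finset.card_pos.mpr hT_ne
  -- farthest representative of each direction class
  have H : ∀ u ∈ T, ∃ p, p ∈ s ∧ dirv v p = u ∧
      ∀ q ∈ s, dirv v q = u → ‖q - v‖ ≤ ‖p - v‖ := by
    intro u hu
    obtain ⟨p0, hp0, hd0⟩ := Finset.mem_image.mp hu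
    obtain ⟨p, hp, hmaxp⟩ := (s.filter (fun q => dirv v q = u)).exists_max_image
      (fun q => ‖q - v‖) ⟨p0, Finset.mem_filter.mpr ⟨hp0, hd0⟩⟩
    have hp' := Finset.mem_filter.mp hp
    exact ⟨p, hp'.1, hp'.2, fun q hq hqd => hmaxp q (Finset.mem_filter.mpr ⟨hq, hqd⟩)⟩
  choose rep hrep1 hrep2 hrep3 using H
  set en : Fin T.card → {x // x ∈ T} := fun i => T.equivFin.symm i with hen_def
  set e : Fin T.card → Pt := fun i => rep (en i).1 (en i).2 with he_def
  have he_mem : ∀ i, e i ∈ s := fun i => hrep1 _ _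
  have he_ne : ∀ i, e i ≠ v := fun i => (Finset.mem_erase.mp (he_mem i)).1
  have he_dir : ∀ i, dirv v (e i) = (en i).1 := fun i => hrep2 _ _
  have he_dir_ne : ∀ i j, i ≠ j → dirv v (e i) ≠ dirv v (e j) := by
    intro i j hij h
    apply hij
    have : (en i) = (en j) := Subtype.ext (by rw [← he_dir i, ← he_dir j, h])
    exact T.equivFin.symm.injective this
  refine ⟨v, T.card, e, hT, he_ne, ?_, ?_, ?_⟩
  · -- pairwise intersections
    intro i j hij
    apply Set.eq_singleton_iff_unique_mem.mpr
    constructor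
    · exact ⟨left_mem_segment ℝ v (e i), left_mem_segment ℝ v (e j)⟩
    · rintro x ⟨hx1, hx2⟩
      rw [segment_eq_image' ℝ v (e i)] at hx1
      rw [segment_eq_image' ℝ v (e j)] at hx2
      obtain ⟨θ, hθ, hθx⟩ := hx1
      obtain ⟨τ, hτ, hτx⟩ := hx2
      have heq : θ • (e i - v) = τ • (e j - v) := by
        have := hθx.trans hτx.symm
        exact add_left_cancel this
      rcases eq_or_lt_of_le hθ.1 with h0 | h0
      · rw [← hθx, ← h0]; simp
      · exfalso
        have hτ0 : τ ≠ 0 := by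
          intro h
          rw [h, zero_smul, smul_eq_zero] at heq
          rcases heq with h | h
          · exact absurd h (ne_of_gt h0)
          · exact he_ne i (sub_eq_zero.mp h)
        have hτpos : 0 < τ := lt_of_le_of_ne hτ.1 (Ne.symm hτ0)
        have hkey : e i - v = (τ / θ) • (e j - v) := by
          rw [div_eq_inv_mul, ← smul_smul, ← heq, smul_smul,
            inv_mul_cancel₀ (ne_of_gt h0), one_smul]
        exact he_dir_ne i j hij
          (dir_eq v (e j) (e i) (he_ne j) (τ / θ) (div_pos hτpos h0) hkey)
  · -- coverage
    intro p hp
    have hpS : p ∈ S := hp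
    by_cases hpv : p = v
    · refine Set.mem_iUnion.mpr ⟨⟨0, hm1⟩, ?_⟩
      rw [hpv]; exact left_mem_segment ℝ v _
    · have hps : p ∈ s := Finset.mem_erase.mpr ⟨hpv, hpS⟩
      have hu : dirv v p ∈ T := Finset.mem_image_of_mem _ hps
      set i : Fin T.card := T.equivFin ⟨dirv v p, hu⟩ with hi_def
      have hen_i : en i = ⟨dirv v p, hu⟩ := T.equivFin.symm_apply_apply _
      have hd_i : dirv v (e i) = dirv v p := by rw [he_dir i, hen_i]
      have hmax_i : ‖p - v‖ ≤ ‖e i - v‖ :=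
        hrep3 (en i).1 (en i).2 p hps (by rw [hen_i])
      have hne_i : e i ≠ v := he_ne i
      have hrn : ‖e i - v‖ ≠ 0 := norm_ne_zero_iff.mpr (sub_ne_zero.mpr hne_i)
      have hrnpos : 0 < ‖e i - v‖ := lt_of_le_of_ne (norm_nonneg _) (Ne.symm hrn)
      set t : ℝ := ‖p - v‖ / ‖e i - v‖ with ht_def
      have hpt : p - v = t • (e i - v) := by
        have h1 : p - v = ‖p - v‖ • dirv v p := dir_repr v p hpv
        have h2 : e i - v = ‖e i - v‖ • dirv v p := by
          rw [← hd_i]; exact dir_repr v (e i) hne_i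
        rw [h2, smul_smul, ht_def, div_mul_cancel₀ _ hrn]
        exact h1
      refine Set.mem_iUnion.mpr ⟨i, ?_⟩
      rw [segment_eq_image' ℝ v (e i)]
      refine ⟨t, ⟨div_nonneg (norm_nonneg _) (norm_nonneg _), (div_le_one hrnpos).mpr hmax_i⟩, ?_⟩
      show v + t • (e i - v) = p
      rw [← hpt]
      abel
  · -- strip
    intro x hx
    obtain ⟨i, hxi⟩ := Set.mem_iUnion.mp hx
    rw [segment_eq_image' ℝ v (e i)] at hxi
    obtain ⟨θ, hθ, rfl⟩ := hxi
    have hx0 : (v + θ • (e i - v)) 0 = v 0 + θ * (e i 0 - v 0) := rfl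
    have heS : e i ∈ S := Finset.mem_of_mem_erase (he_mem i)
    have hei := hS (e i) heS
    constructor
    · show xmin ≤ (v + θ • (e i - v)) 0
      rw [hx0]; nlinarith [hθ.1, hθ.2, hei.1, hei.2]
    · show (v + θ • (e i - v)) 0 ≤ xmax
      rw [hx0]; nlinarith [hθ.1, hθ.2, hei.1, hei.2]

lemma ne_of_x {p q : Pt} (h : p 0 ≠ q 0) : p ≠ q := fun hpq => h (by rw [hpq])

lemma collinear_hT (S : Finset Pt) (hcard : S.card = 7) {a b c : Pt}
    (ha : a ∈ S) (hb : b ∈ S) (hc : c ∈ S)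
    (hab0 : a 0 < b 0) (hac0 : a 0 < c 0) (hbc : b ≠ c)
    (hor : orient a b c = 0) :
    ((S.erase a).image (dirv a)).card ≤ 5 := by
  have hba : b ≠ a := ne_of_x (ne_of_gt hab0)
  have hca : c ≠ a := ne_of_x (ne_of_gt hac0)
  have hbs : b ∈ S.erase a := Finset.mem_erase.mpr ⟨hba, hb⟩
  have hcs : c ∈ S.erase a := Finset.mem_erase.mpr ⟨hca, hc⟩
  have hb0 : b 0 - a 0 ≠ 0 := ne_of_gt (by linarith)
  set μ : ℝ := (c 0 - a 0) / (b 0 - a 0) with hμdef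
  have hμ : 0 < μ := div_pos (by linarith) (by linarith)
  have hor' : (b 0 - a 0) * (c 1 - a 1) - (c 0 - a 0) * (b 1 - a 1) = 0 := hor
  have hkey : c - a = μ • (b - a) := by
    ext i
    fin_cases i
    · show c 0 - a 0 = μ * (b 0 - a 0)
      rw [hμdef]
      field_simp
    · show c 1 - a 1 = μ * (b 1 - a 1)
      rw [hμdef]
      field_simp
      linear_combination hor'
  have hdir : dirv a c = dirv a b := dir_eq a b c hba μ hμ hkey
  have h5 := image_card_le_one_collision hcs hbs hbc.symm hdir
  rw [Finset.card_erase_of_mem ha, hcard] at h5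
  omega

set_option maxHeartbeats 2000000 in
lemma cross_v (S : Finset Pt) (hcard : S.card = 7)
    (hnc : ∀ p ∈ S, ∀ q ∈ S, ∀ r ∈ S, p ≠ q → p ≠ r → q ≠ r → orient p q r ≠ 0)
    {a b c d : Pt} (ha : a ∈ S) (hb : b ∈ S) (hc : c ∈ S) (hd : d ∈ S)
    (h1 : a 0 < b 0) (h2 : b 0 < c 0) (h3 : c 0 < d 0)
    (hsgn : 0 < orient a b c * orient b c d) :
    ∃ v : Pt, b 0 < v 0 ∧ v 0 < c 0 ∧ ((S.erase v).image (dirv v)).card ≤ 5 := by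
  have hba0 : b 0 - a 0 ≠ 0 := ne_of_gt (by linarith)
  have hdc0 : d 0 - c 0 ≠ 0 := ne_of_gt (by linarith)
  set P : ℝ := orient b c d * (b 0 - a 0) with hP
  set Q : ℝ := -(orient a b c) * (d 0 - c 0) with hQ
  have hPQ : P * Q < 0 := by
    have hPQ' : P * Q = -((orient a b c * orient b c d) * ((b 0 - a 0) * (d 0 - c 0))) := by
      rw [hP, hQ]; ring
    rw [hPQ']
    have hpos : 0 < (b 0 - a 0) * (d 0 - c 0) := by nlinarith
    nlinarith
  have k1 : 0 < P * (P - Q) := by nlinarith [sq_nonneg P]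
  have k2 : 0 < (-Q) * (P - Q) := by nlinarith [sq_nonneg Q]
  have hden : P - Q ≠ 0 := by
    intro h; rw [h, mul_zero] at k1; exact lt_irrefl _ k1
  set t : ℝ := P / (P - Q) with ht
  have ht0 : 0 < t := by
    rcases mul_pos_iff.mp k1 with ⟨hy, hz⟩ | ⟨hy, hz⟩
    · exact div_pos hy hz
    · exact div_pos_of_neg_of_neg hy hz
  have ht1 : t < 1 := by
    have h1t : 1 - t = (-Q) / (P - Q) := by
      rw [ht]; field_simp; ring
    have hpos : 0 < 1 - t := by
      rw [h1t]
      rcases mul_pos_iff.mp k2 with ⟨hy, hz⟩ | ⟨hy, hz⟩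
      · exact div_pos hy hz
      · exact div_pos_of_neg_of_neg hy hz
    linarith
  set s1 : ℝ := (b 1 - a 1) / (b 0 - a 0) with hs1
  set s2 : ℝ := (d 1 - c 1) / (d 0 - c 0) with hs2
  set xv : ℝ := b 0 + t * (c 0 - b 0) with hxv
  set yv : ℝ := a 1 + (xv - a 0) * s1 with hyv
  set v : Pt := mk xv yv with hv
  have hv0 : v 0 = xv := rfl
  have hv1 : v 1 = yv := rfl
  have hxvb : b 0 < xv := by rw [hxv]; nlinarith
  have hxvc : xv < c 0 := by rw [hxv]; nlinarith
  have haxv : a 0 - xv ≠ 0 := ne_of_lt (by linarith)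
  have hcxv : c 0 - xv ≠ 0 := ne_of_gt (by linarith)
  -- v lies on line (c,d) too
  set G : ℝ := (a 1 - c 1) * ((b 0 - a 0) * (d 0 - c 0)) + (xv - a 0) * ((b 1 - a 1) * (d 0 - c 0))
      - (xv - c 0) * ((d 1 - c 1) * (b 0 - a 0)) with hGdef
  have hxvW : xv * (P - Q) = b 0 * (P - Q) + P * (c 0 - b 0) := by
    rw [hxv, ht]
    field_simp
  have hG0 : G * (P - Q) = 0 := by
    rw [hGdef, hP, hQ]
    rw [hP, hQ] at hxvW
    have horb : orient b c d = (c 0 - b 0) * (d 1 - b 1) - (d 0 - b 0) * (c 1 - b 1) := rfl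
    have hora : orient a b c = (b 0 - a 0) * (c 1 - a 1) - (c 0 - a 0) * (b 1 - a 1) := rfl
    rw [horb, hora] at hxvW ⊢
    linear_combination ((b 1 - a 1) * (d 0 - c 0) - (d 1 - c 1) * (b 0 - a 0)) * hxvW
  have hG : G = 0 := by
    rcases mul_eq_zero.mp hG0 with h | h
    · exact h
    · exact absurd h hden
  have hkey : yv = c 1 + (xv - c 0) * s2 := by
    have hfrac : yv - (c 1 + (xv - c 0) * s2) = G / ((b 0 - a 0) * (d 0 - c 0)) := by
      rw [hyv, hs1, hs2, hGdef]
      field_simp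
      ring
    rw [hG, zero_div] at hfrac
    linarith
  have hav : a ≠ v := ne_of_x (by rw [hv0]; exact ne_of_lt (by linarith))
  have hbv : b ≠ v := ne_of_x (by rw [hv0]; exact ne_of_lt hxvb)
  have hcv : c ≠ v := ne_of_x (by rw [hv0]; exact ne_of_gt hxvc)
  have hdv : d ≠ v := ne_of_x (by rw [hv0]; exact ne_of_gt (by linarith))
  -- collision 1 : a and b have the same direction from v
  set μ1 : ℝ := (b 0 - xv) / (a 0 - xv) with hμ1
  have hμ1pos : 0 < μ1 :=
    div_pos_of_neg_of_neg (by linarith) (by linarith)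
  have hcol1 : b - v = μ1 • (a - v) := by
    ext i
    fin_cases i
    · show b 0 - xv = μ1 * (a 0 - xv)
      rw [hμ1]; field_simp
    · show b 1 - yv = μ1 * (a 1 - yv)
      rw [hμ1, hyv, hs1]
      field_simp
      ring
  have hdir1 : dirv v b = dirv v a := dir_eq v a b hav μ1 hμ1pos hcol1
  -- collision 2 : c and d have the same direction from v
  set μ2 : ℝ := (d 0 - xv) / (c 0 - xv) with hμ2
  have hμ2pos : 0 < μ2 := div_pos (by linarith) (by linarith)
  have hcol2 : d - v = μ2 • (c - v) := by
    ext i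
    fin_cases i
    · show d 0 - xv = μ2 * (c 0 - xv)
      rw [hμ2]; field_simp
    · show d 1 - yv = μ2 * (c 1 - yv)
      rw [hμ2, hkey, hs2]
      field_simp
      ring
  have hdir2 : dirv v d = dirv v c := dir_eq v c d hcv μ2 hμ2pos hcol2
  -- v is not a point of S
  have hvS : v ∉ S := by
    intro hvS
    have habv : orient a b v = 0 := by
      have hrfl : orient a b v = (b 0 - a 0) * (yv - a 1) - (xv - a 0) * (b 1 - a 1) := rfl
      rw [hrfl, hyv, hs1]
      field_simp
      ring
    exact hnc a ha b hb v hvS (ne_of_x (ne_of_lt h1)) hav hbv habv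
  have herase : S.erase v = S := Finset.erase_eq_of_notMem hvS
  refine ⟨v, by rw [hv0]; exact hxvb, by rw [hv0]; exact hxvc, ?_⟩
  rw [herase]
  have h5 := image_card_le_two_collision hb ha hd hc
    (ne_of_x (ne_of_gt h1)) (ne_of_x (ne_of_gt h3))
    (ne_of_x (ne_of_lt (show b 0 < d 0 by linarith)))
    (ne_of_x (ne_of_lt h2))
    (ne_of_x (ne_of_lt (show a 0 < d 0 by linarith)))
    (ne_of_x (ne_of_lt (show a 0 < c 0 by linarith)))
    hdir1 hdir2
  rw [hcard] at h5
  omega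

end Star16

open Star16 in
/-- Any 7 points with pairwise distinct x-coordinates can be covered by a
star of at most 5 segments contained in the closed vertical strip spanned by
their minimum and maximum x-coordinates. -/
theorem stmt_16 (S : Finset Pt) (hcard : S.card = 7)
    (hx : ∀ p ∈ S, ∀ q ∈ S, p ≠ q → p 0 ≠ q 0)
    (xmin xmax : ℝ)
    (hmin : IsLeast ((fun p : Pt => p 0) '' (S : Set Pt)) xmin)
    (hmax : IsGreatest ((fun p : Pt => p 0) '' (S : Set Pt)) xmax) :
    ∃ (v : Pt) (m : ℕ) (e : Fin m → Pt), m ≤ 5 ∧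
      (∀ i, e i ≠ v) ∧
      (∀ i j, i ≠ j → segment ℝ v (e i) ∩ segment ℝ v (e j) = {v}) ∧
      (S : Set Pt) ⊆ (⋃ i, segment ℝ v (e i)) ∧
      (⋃ i, segment ℝ v (e i)) ⊆ {q : Pt | xmin ≤ q 0 ∧ q 0 ≤ xmax} := by
  classical
  have hS' : ∀ p ∈ S, xmin ≤ p 0 ∧ p 0 ≤ xmax := fun p hp =>
    ⟨hmin.2 ⟨p, Finset.mem_coe.mpr hp, rfl⟩, hmax.2 ⟨p, Finset.mem_coe.mpr hp, rfl⟩⟩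
  by_cases hcol : ∃ p ∈ S, ∃ q ∈ S, ∃ r ∈ S, p ≠ q ∧ p ≠ r ∧ q ≠ r ∧ orient p q r = 0
  · -- a collinear triple exists
    obtain ⟨p, hp, q, hq, r, hr, hpq, hpr, hqr, hor⟩ := hcol
    have e1 : orient q p r = 0 := by
      unfold Star16.orient at hor ⊢; linear_combination -hor
    have e2 : orient r p q = 0 := by
      unfold Star16.orient at hor ⊢; linear_combination hor
    rcases lt_or_gt_of_ne (hx p hp q hq hpq) with hpq0 | hpq0 <;>
      rcases lt_or_gt_of_ne (hx p hp r hr hpr) with hpr0 | hpr0 <;>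
        rcases lt_or_gt_of_ne (hx q hq r hr hqr) with hqr0 | hqr0
    -- p is the minimum
    · exact wrap S hcard xmin xmax hS' p (hS' p hp).1 (hS' p hp).2
        (collinear_hT S hcard hp hq hr hpq0 hpr0 hqr hor)
    · exact wrap S hcard xmin xmax hS' p (hS' p hp).1 (hS' p hp).2
        (collinear_hT S hcard hp hq hr hpq0 hpr0 hqr hor)
    · exact absurd rfl (by linarith : (0:ℝ) ≠ 0)
    · exact wrap S hcard xmin xmax hS' r (hS' r hr).1 (hS' r hr).2
        (collinear_hT S hcard hr hp hq hpr0 hqr0 hpq e2)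
    · exact wrap S hcard xmin xmax hS' q (hS' q hq).1 (hS' q hq).2
        (collinear_hT S hcard hq hp hr hpq0 hqr0 hpr e1)
    · exact absurd rfl (by linarith : (0:ℝ) ≠ 0)
    · exact wrap S hcard xmin xmax hS' q (hS' q hq).1 (hS' q hq).2
        (collinear_hT S hcard hq hp hr hpq0 hqr0 hpr e1)
    · exact wrap S hcard xmin xmax hS' r (hS' r hr).1 (hS' r hr).2
        (collinear_hT S hcard hr hp hq hpr0 hqr0 hpq e2)
  · -- general position
    push_neg at hcol
    have hnc : ∀ p ∈ S, ∀ q ∈ S, ∀ r ∈ S, p ≠ q → p ≠ r → q ≠ r → orient p q r ≠ 0 :=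
      fun p hp q hq r hr h1 h2 h3 => hcol p hp q hq r hr h1 h2 h3
    -- enumerate the points of S in increasing x-order
    have hinj : Set.InjOn (fun p : Pt => p 0) S := by
      intro p hp q hq h
      by_contra hne
      exact hx p hp q hq hne h
    set X : Finset ℝ := S.image (fun p => p 0) with hX
    have hXcard : X.card = 7 := by
      rw [hX, Finset.card_image_of_injOn hinj, hcard]
    set o := X.orderIsoOfFin hXcard with ho
    have hmem : ∀ i : Fin 7, ∃ p, p ∈ S ∧ p 0 = (o i : ℝ) := by
      intro i
      have hoi : (o i : ℝ) ∈ S.image (fun p => p 0) := (o i).2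
      obtain ⟨p, hp, hpe⟩ := Finset.mem_image.mp hoi
      exact ⟨p, hp, hpe⟩
    choose qf hqf1 hqf2 using hmem
    have hqmono : ∀ i j : Fin 7, i < j → qf i 0 < qf j 0 := by
      intro i j hij
      rw [hqf2 i, hqf2 j]
      exact_mod_cast o.strictMono hij
    have hqne : ∀ i j : Fin 7, i < j → qf i ≠ qf j :=
      fun i j hij => ne_of_x (ne_of_lt (hqmono i j hij))
    set χ : Fin 7 → Fin 7 → Fin 7 → ℝ :=
      fun i j k => orient (qf i) (qf j) (qf k) with hχdef
    have hχ : ∀ i j k : Fin 7, i < j → j < k → χ i j k ≠ 0 := fun i j k hij hjk =>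
      hnc _ (hqf1 i) _ (hqf1 j) _ (hqf1 k) (hqne i j hij) (hqne i k (hij.trans hjk))
        (hqne j k hjk)
    have key : ∃ i j k l : Fin 7, i < j ∧ j < k ∧ k < l ∧ 0 < χ i j k * χ j k l := by
      by_contra hno
      push_neg at hno
      have n : ∀ i j k l : Fin 7, i < j → j < k → k < l → χ i j k * χ j k l < 0 := by
        intro i j k l hij hjk hkl
        exact lt_of_le_of_ne (hno i j k l hij hjk hkl)
          (mul_ne_zero (hχ i j k hij hjk) (hχ j k l hjk hkl))
      have n1 := n 0 1 2 3 (by decide) (by decide) (by decide)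
      have n2 := n 1 2 3 4 (by decide) (by decide) (by decide)
      have n3 := n 2 3 4 5 (by decide) (by decide) (by decide)
      have n4 := n 0 1 2 4 (by decide) (by decide) (by decide)
      have n5 := n 1 2 4 5 (by decide) (by decide) (by decide)
      have n6 := n 2 4 5 6 (by decide) (by decide) (by decide)
      have n7 := n 3 4 5 6 (by decide) (by decide) (by decide)
      have A1 : 0 < χ 0 1 2 * χ 2 3 4 := sgn1 n1 n2
      have A2 : χ 0 1 2 * χ 3 4 5 < 0 := sgn2 A1 n3
      have A3 : 0 < χ 0 1 2 * χ 2 4 5 := sgn1 n4 n5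
      have A4 : χ 0 1 2 * χ 4 5 6 < 0 := sgn2 A3 n6
      have A2' : χ 3 4 5 * χ 0 1 2 < 0 := by rw [mul_comm]; exact A2
      have A5 : 0 < χ 3 4 5 * χ 4 5 6 := sgn1 A2' A4
      linarith
    obtain ⟨i, j, k, l, hij, hjk, hkl, hpos⟩ := key
    obtain ⟨v, hvb, hvc, hT⟩ := cross_v S hcard hnc (hqf1 i) (hqf1 j) (hqf1 k) (hqf1 l)
      (hqmono i j hij) (hqmono j k hjk) (hqmono k l hkl) hpos
    exact wrap S hcard xmin xmax hS' v
      (le_of_lt (lt_of_le_of_lt (hS' (qf j) (hqf1 j)).1 hvb))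
      (le_of_lt (lt_of_lt_of_le hvc (hS' (qf k) (hqf1 k)).2))
      hT
end
end

section
/- Every set of n ≥ 2 points in ℝ² admits a noncrossing covering path with at most n − 1 segments. -/
noncomputable section

open scoped RealInnerProductSpace

/-- Every set of `n ≥ 2` points admits a noncrossing covering path with at
most `n - 1` segments. -/
theorem stmt_17 (n : ℕ) (hn : 2 ≤ n) (S : Finset Pt) (hcard : S.card = n) :
    ∃ m : ℕ, m ≤ n - 1 ∧ ∃ v : Fin (m + 1) → Pt,
      IsCoveringPath (S : Set Pt) m v ∧ IsNoncrossing m v := by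
  obtain ⟨m, rfl⟩ : ∃ m, n = m + 1 := ⟨n - 1, by omega⟩
  have hm : 1 ≤ m := by omega
  -- find a generic slope ε
  have hBfin : ({ε : ℝ | ∃ p ∈ (S : Set Pt), ∃ q ∈ (S : Set Pt),
      p ≠ q ∧ p 0 + ε * p 1 = q 0 + ε * q 1}).Finite := by
    have hsub : {ε : ℝ | ∃ p ∈ (S : Set Pt), ∃ q ∈ (S : Set Pt),
        p ≠ q ∧ p 0 + ε * p 1 = q 0 + ε * q 1}
        ⊆ ⋃ p ∈ (S : Set Pt), ⋃ q ∈ (S : Set Pt),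
          {ε : ℝ | p ≠ q ∧ p 0 + ε * p 1 = q 0 + ε * q 1} := by
      rintro ε ⟨p, hp, q, hq, h⟩
      exact Set.mem_biUnion hp (Set.mem_biUnion hq h)
    refine Set.Finite.subset ?_ hsub
    refine Set.Finite.biUnion S.finite_toSet fun p _ =>
      Set.Finite.biUnion S.finite_toSet fun q _ => ?_
    by_cases h1 : p 1 = q 1
    · refine Set.Finite.subset Set.finite_empty ?_
      rintro ε ⟨hne, heq⟩
      exfalso
      apply hne
      have h0 : p 0 = q 0 := by rw [h1] at heq; linarith
      ext i
      fin_cases i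
      · exact h0
      · exact h1
    · refine Set.Finite.subset (Set.finite_singleton ((q 0 - p 0) / (p 1 - q 1))) ?_
      rintro ε ⟨hne, heq⟩
      have hsub1 : p 1 - q 1 ≠ 0 := sub_ne_zero.mpr h1
      rw [Set.mem_singleton_iff, eq_div_iff hsub1]
      linarith
  obtain ⟨ε, hε⟩ := hBfin.infinite_compl.nonempty
  set g : Pt → ℝ := fun p => p 0 + ε * p 1 with hg
  have hinj : Set.InjOn g (S : Set Pt) := by
    intro p hp q hq hpq
    by_contra hne
    exact hε ⟨p, hp, q, hq, hne, hpq⟩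
  have hgaff : ∀ (u w : ℝ) (a b : Pt), g (u • a + w • b) = u * g a + w * g b := by
    intro u w a b
    simp only [hg, PiLp.add_apply, PiLp.smul_apply, smul_eq_mul]
    ring
  have key1 : ∀ A B u w : ℝ, 0 ≤ u → 0 ≤ w → u + w = 1 → A ≤ B →
      A ≤ u * A + w * B ∧ u * A + w * B ≤ B := by
    intro A B u w hu hw huw hab
    have hw' : w = 1 - u := by linarith
    subst hw'
    constructor
    · nlinarith [mul_nonneg hw (sub_nonneg.mpr hab)]
    · nlinarith [mul_nonneg hu (sub_nonneg.mpr hab)]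
  have hseg_le : ∀ a b x : Pt, g a ≤ g b → x ∈ segment ℝ a b → g a ≤ g x ∧ g x ≤ g b := by
    rintro a b x hab ⟨u, w, hu, hw, huw, rfl⟩
    rw [hgaff]
    exact key1 _ _ _ _ hu hw huw hab
  have hseg_eq : ∀ a b x : Pt, g a < g b → x ∈ segment ℝ a b → g x = g b → x = b := by
    rintro a b x hab ⟨u, w, hu, hw, huw, rfl⟩ hx
    rw [hgaff] at hx
    have hu0 : u = 0 := by
      by_contra h
      have hupos : 0 < u := lt_of_le_of_ne hu (Ne.symm h)
      have hw' : w = 1 - u := by linarith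
      subst hw'
      nlinarith [mul_pos hupos (sub_pos.mpr hab)]
    have hw1 : w = 1 := by linarith
    rw [hu0, hw1, zero_smul, one_smul, zero_add]
  have hTcard : (S.image g).card = m + 1 := by
    rw [Finset.card_image_of_injOn hinj, hcard]
  set o := (S.image g).orderIsoOfFin hTcard with ho
  have hv : ∀ i : Fin (m + 1), ∃ p, p ∈ S ∧ g p = (o i : ℝ) := by
    intro i
    have h2 := (o i).2
    rw [Finset.mem_image] at h2
    obtain ⟨p, hp, hgp⟩ := h2
    exact ⟨p, hp, hgp⟩
  choose v hvS hvg using hv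
  have hGmono : StrictMono fun i : Fin (m + 1) => g (v i) := by
    intro i j hij
    simp only [hvg]
    exact_mod_cast o.strictMono hij
  refine ⟨m, by omega, v, ?_, ?_⟩
  · -- covering
    intro p hp
    have hmem : g p ∈ S.image g := Finset.mem_image_of_mem g hp
    obtain ⟨i, hi⟩ : ∃ i, (o i : ℝ) = g p := ⟨o.symm ⟨g p, hmem⟩, by simp⟩
    have hpi : v i = p := hinj (hvS i) hp (by rw [hvg, hi])
    by_cases h : (i : ℕ) < m
    · refine ⟨⟨i, h⟩, ?_⟩
      have hcs : (⟨(i : ℕ), h⟩ : Fin m).castSucc = i := by ext; simp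
      rw [pathSeg, hcs, hpi]
      exact left_mem_segment ℝ _ _
    · have him : (i : ℕ) = m := by omega
      refine ⟨⟨m - 1, by omega⟩, ?_⟩
      have hcs : (⟨m - 1, by omega⟩ : Fin m).succ = i := by
        ext; simp; omega
      rw [pathSeg, hcs, hpi]
      exact right_mem_segment ℝ _ _
  · -- noncrossing
    intro i j hij
    have h1 : g (v i.castSucc) < g (v i.succ) := hGmono (Fin.castSucc_lt_succ : i.castSucc < i.succ)
    have h2 : g (v j.castSucc) < g (v j.succ) := hGmono (Fin.castSucc_lt_succ : j.castSucc < j.succ)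
    constructor
    · intro hji
      have hcs : j.castSucc = i.succ := by ext; simp [hji]
      ext x
      simp only [Set.mem_inter_iff, Set.mem_singleton_iff]
      constructor
      · rintro ⟨hxi, hxj⟩
        rw [pathSeg] at hxi hxj
        have b1 := (hseg_le _ _ _ h1.le hxi).2
        have b2 := (hseg_le _ _ _ h2.le hxj).1
        rw [hcs] at b2
        exact hseg_eq _ _ _ h1 hxi (le_antisymm b1 b2)
      · rintro rfl
        constructor
        · exact right_mem_segment ℝ _ _
        · rw [pathSeg, hcs]
          exact left_mem_segment ℝ _ _
    · intro hlt
      rw [Set.eq_empty_iff_forall_notMem]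
      rintro x ⟨hxi, hxj⟩
      rw [pathSeg] at hxi hxj
      have b1 := (hseg_le _ _ _ h1.le hxi).2
      have b2 := (hseg_le _ _ _ h2.le hxj).1
      have hlt' : i.succ < j.castSucc := by
        rw [Fin.lt_def]
        simpa using hlt
      have := hGmono hlt'
      linarith
end
end
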